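/- arXiv:1103.5873 — 2 statements merged into one kernel-verified Lean document; each statement's English description precedes it below -/
import Mathlib

section
/- Let the setting be type A_N or type B_N, let (i_t,k_t), 1 ≤ t ≤ T, be a snake, and let (p_1,…,p_T) ∈ P̄_{(i_t,k_t)}. If (p_1,…,p_T) ≠ (p⁺_{i_1,k_1},…,p⁺_{i_T,k_T}) then ∏_{t=1}^T m(p_t) is not dominant, and if (p_1,…,p_T) ≠ (p⁻_{i_1,k_1},…,p⁻_{i_T,k_T}) then ∏_{t=1}^T m(p_t) is not anti-dominant. -/
namespace Paper

/-- The ambient setting: type `A N` (with `N ≥ 1`) or type `B N ε`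
(with `N ≥ 2` and `0 < ε < 1/2`). -/
inductive Setting where
  | A (N : ℕ)
  | B (N : ℕ) (ε : ℝ)

namespace Setting

/-- The rank `N`. -/
def N : Setting → ℕ
  | A n => n
  | B n _ => n

/-- Validity of the parameters of the setting. -/
def valid : Setting → Prop
  | A n => 1 ≤ n
  | B n ε => 2 ≤ n ∧ 0 < ε ∧ ε < 1 / 2

end Setting

/-- The numbers `r_i` : in type A all equal `1`; in type B, `r_N = 1` and `r_i = 2` for `i < N`. -/
def rr : Setting → ℕ → ℕ
  | .A _, _ => 1
  | .B n _, j => if j = n then 1 else 2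

/-- The set `X` in type `A_N`. -/
def XA (n : ℕ) : Set (ℕ × ℤ) :=
  {ik | 1 ≤ ik.1 ∧ ik.1 ≤ n ∧ ((ik.1 : ℤ) - ik.2) % 2 = 1}

/-- The set `X` in type `B_N`. -/
def XB (n : ℕ) : Set (ℕ × ℤ) :=
  {ik | (ik.1 = n ∧ ik.2 % 2 = 1) ∨ (1 ≤ ik.1 ∧ ik.1 < n ∧ ik.2 % 2 = 0)}

/-- The set `X ⊆ I × ℤ`. -/
def X : Setting → Set (ℕ × ℤ)
  | .A n => XA n
  | .B n _ => XB n

/-- The set `W = {(i,k) : (i, k - r_i) ∈ X}`. -/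
def W (S : Setting) : Set (ℕ × ℤ) :=
  {ik | (ik.1, ik.2 - (rr S ik.1 : ℤ)) ∈ X S}

/-- The `r`-th point of a path (a finite list of points of the plane). -/
def pt (p : List (ℝ × ℝ)) (r : ℕ) : ℝ × ℝ := p.getD r (0, 0)

/-- The set of paths `𝒫_{i,k}` in type `A_N`. -/
def pathsA (n : ℕ) (i : ℕ) (k : ℤ) : Set (List (ℝ × ℝ)) :=
  {p | p.length = n + 2 ∧
    (∀ r, r < n + 2 → (pt p r).1 = (r : ℝ)) ∧
    (pt p 0).2 = (i : ℝ) + (k : ℝ) ∧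
    (pt p (n + 1)).2 = (n : ℝ) + 1 - (i : ℝ) + (k : ℝ) ∧
    (∀ r, r ≤ n → (pt p (r + 1)).2 - (pt p r).2 = 1 ∨ (pt p (r + 1)).2 - (pt p r).2 = -1)}

/-- The set of paths `𝒫_{N,ℓ}` in type `B_N`. -/
def pathsBspin (n : ℕ) (ε : ℝ) (l : ℤ) : Set (List (ℝ × ℝ)) :=
  {p | p.length = n + 1 ∧
    (if l % 4 = 3 then ∀ r, r < n → (pt p r).1 = 2 * (r : ℝ)
     else ∀ r, r < n → (pt p r).1 = 4 * (n : ℝ) - 2 - 2 * (r : ℝ)) ∧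
    (pt p n).1 = 2 * (n : ℝ) - 1 ∧
    (pt p 0).2 = (l : ℝ) + 2 * (n : ℝ) - 1 ∧
    (∀ r, r + 2 ≤ n → (pt p (r + 1)).2 - (pt p r).2 = 2 ∨ (pt p (r + 1)).2 - (pt p r).2 = -2) ∧
    ((pt p n).2 - (pt p (n - 1)).2 = 1 + ε ∨ (pt p n).2 - (pt p (n - 1)).2 = -(1 + ε))}

/-- The set of paths `𝒫_{i,k}` in type `B_N`. -/
def pathsB (n : ℕ) (ε : ℝ) (i : ℕ) (k : ℤ) : Set (List (ℝ × ℝ)) :=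
  if i = n then pathsBspin n ε k
  else {p | ∃ a b : List (ℝ × ℝ),
    a ∈ pathsBspin n ε (k - (2 * (n : ℤ) - 2 * (i : ℤ) - 1)) ∧
    b ∈ pathsBspin n ε (k + (2 * (n : ℤ) - 2 * (i : ℤ) - 1)) ∧
    p = a ++ b.reverse ∧
    (pt a n).1 = (pt b n).1 ∧ 0 < (pt a n).2 - (pt b n).2}

/-- The set of paths `𝒫_{i,k}`. -/
def P : Setting → ℕ → ℤ → Set (List (ℝ × ℝ))
  | .A n => pathsA n
  | .B n ε => pathsB n ε

/-- The map `ι : X → ℤ × ℤ` of type `B_N`. -/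
def iotaB (n : ℕ) (ik : ℕ × ℤ) : ℤ × ℤ :=
  if ik.1 = n then (2 * (n : ℤ) - 1, ik.2)
  else if (2 * (n : ℤ) + ik.2 - 2 * (ik.1 : ℤ)) % 4 = 2 then (2 * (ik.1 : ℤ), ik.2)
  else (4 * (n : ℤ) - 2 - 2 * (ik.1 : ℤ), ik.2)

/-- The corners of a path: `Cp S p true` is the set `C_{p,+}` of upper corners, and
`Cp S p false` is the set `C_{p,-}` of lower corners. -/
def Cp (S : Setting) (p : List (ℝ × ℝ)) (up : Bool) : Set (ℕ × ℤ) :=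
  match S with
  | .A n =>
    {jl | 1 ≤ jl.1 ∧ jl.1 ≤ n ∧
      pt p jl.1 = ((jl.1 : ℝ), (jl.2 : ℝ)) ∧
      (pt p (jl.1 - 1)).2 = (jl.2 : ℝ) + (if up then 1 else -1) ∧
      (pt p (jl.1 + 1)).2 = (jl.2 : ℝ) + (if up then 1 else -1)}
  | .B n ε =>
    {jl | jl ∈ XB n ∧
      ((∃ r : ℕ, 1 ≤ r ∧ r + 1 < p.length ∧
          pt p r = (((iotaB n jl).1 : ℝ), ((iotaB n jl).2 : ℝ)) ∧
          (iotaB n jl).1 ≠ 0 ∧ (iotaB n jl).1 ≠ 2 * (n : ℤ) - 1 ∧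
          (iotaB n jl).1 ≠ 4 * (n : ℤ) - 2 ∧
          (if up then (pt p r).2 < (pt p (r - 1)).2 ∧ (pt p r).2 < (pt p (r + 1)).2
           else (pt p (r - 1)).2 < (pt p r).2 ∧ (pt p (r + 1)).2 < (pt p r).2))
       ∨ (jl.1 = n ∧
          (if up then (2 * (n : ℝ) - 1, (jl.2 : ℝ) - ε) ∈ p ∧ (2 * (n : ℝ) - 1, (jl.2 : ℝ) + ε) ∉ p
           else (2 * (n : ℝ) - 1, (jl.2 : ℝ) + ε) ∈ p ∧ (2 * (n : ℝ) - 1, (jl.2 : ℝ) - ε) ∉ p)))}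

/-- `p'` is obtained from `p` by replacing the point `q` by the point `q'`. -/
def Replace1 (p p' : List (ℝ × ℝ)) (q q' : ℝ × ℝ) : Prop :=
  ∃ r : ℕ, r < p.length ∧ pt p r = q ∧ p'.length = p.length ∧ pt p' r = q' ∧
    ∀ s, s < p.length → s ≠ r → pt p' s = pt p s

/-- `p'` is obtained from `p` by replacing the point `q1` by `q1'` and the point `q2` by `q2'`. -/
def Replace2 (p p' : List (ℝ × ℝ)) (q1 q1' q2 q2' : ℝ × ℝ) : Prop :=
  ∃ r s : ℕ, r < p.length ∧ s < p.length ∧ r ≠ s ∧ pt p r = q1 ∧ pt p s = q2 ∧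
    p'.length = p.length ∧ pt p' r = q1' ∧ pt p' s = q2' ∧
    ∀ u, u < p.length → u ≠ r → u ≠ s → pt p' u = pt p u

/-- The path `p` can be lowered at `(j, l)`: `(j, l - r_j) ∈ C_{p,+}` and
`(j, l + r_j) ∉ C_{p,+}`. -/
def CanLower (S : Setting) (p : List (ℝ × ℝ)) (j : ℕ) (l : ℤ) : Prop :=
  (j, l - (rr S j : ℤ)) ∈ Cp S p true ∧ (j, l + (rr S j : ℤ)) ∉ Cp S p true

/-- `p'` is the result of the lowering move at `(j,l)` applied to the path `p ∈ 𝒫_{i,k}`;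
written `p' = p 𝒜_{j,l}⁻¹`. -/
def LoweredTo (S : Setting) (i : ℕ) (k : ℤ) (j : ℕ) (l : ℤ)
    (p p' : List (ℝ × ℝ)) : Prop :=
  p ∈ P S i k ∧ p' ∈ P S i k ∧ CanLower S p j l ∧
  (match S with
   | .A _ => Replace1 p p' ((j : ℝ), (l : ℝ) - 1) ((j : ℝ), (l : ℝ) + 1)
   | .B n ε =>
     if j = n then
       Replace1 p p' (2 * (n : ℝ) - 1, (l : ℝ) - 1 - ε) (2 * (n : ℝ) - 1, (l : ℝ) + 1 + ε)
     else if j = n - 1 then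
       Replace2 p p'
         (((iotaB n (j, l - 2)).1 : ℝ), (l : ℝ) - 2) (((iotaB n (j, l - 2)).1 : ℝ), (l : ℝ) + 2)
         (2 * (n : ℝ) - 1, (l : ℝ) - 1 + ε) (2 * (n : ℝ) - 1, (l : ℝ) + 1 - ε)
     else
       Replace1 p p'
         (((iotaB n (j, l - 2)).1 : ℝ), (l : ℝ) - 2) (((iotaB n (j, l - 2)).1 : ℝ), (l : ℝ) + 2))

/-- The path `p` can be raised at `(j,l)`: it is of the form `p' 𝒜_{j,l}⁻¹`. -/
def CanRaise (S : Setting) (i : ℕ) (k : ℤ) (p : List (ℝ × ℝ)) (j : ℕ) (l : ℤ) : Prop :=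
  ∃ p', LoweredTo S i k j l p' p

/-- The monomial group `ℳ`, realised as exponent functions: the free abelian group on the
symbols `Y_{i,k}`, `(i,k) ∈ X`, is identified with finitely supported functions `(ℕ × ℤ) → ℤ`,
written additively. -/
def Y (x : ℕ × ℤ) : (ℕ × ℤ) → ℤ := fun z => if z = x then 1 else 0

noncomputable def ind (s : Prop) : ℤ := @ite ℤ s (Classical.propDecidable s) 1 0

/-- The monomial `m(p)` of a path: `∏ Y_{j,l}` over upper corners times `∏ Y_{j,l}⁻¹`
over lower corners. -/
noncomputable def mon (S : Setting) (p : List (ℝ × ℝ)) : (ℕ × ℤ) → ℤ :=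
  fun x => ind (x ∈ Cp S p true) - ind (x ∈ Cp S p false)

/-- The monomials `A_{j,l}`, with the conventions `Y_{0,·} = Y_{N+1,·} = 1`. -/
def Amon (S : Setting) (j : ℕ) (l : ℤ) : (ℕ × ℤ) → ℤ :=
  match S with
  | .A n =>
      Y (j, l + 1) + Y (j, l - 1) - (if j = 1 then 0 else Y (j - 1, l))
        - (if j = n then 0 else Y (j + 1, l))
  | .B n _ =>
      if j = n then Y (n, l + 1) + Y (n, l - 1) - Y (n - 1, l)
      else if j = n - 1 then
        Y (n - 1, l + 2) + Y (n - 1, l - 2) - (if j = 1 then 0 else Y (n - 2, l))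
          - Y (n, l + 1) - Y (n, l - 1)
      else
        Y (j, l + 2) + Y (j, l - 2) - (if j = 1 then 0 else Y (j - 1, l)) - Y (j + 1, l)

/-- A monomial is dominant iff all its exponents are nonnegative. -/
def Dominant (m : (ℕ × ℤ) → ℤ) : Prop := ∀ x, 0 ≤ m x

/-- A monomial is anti-dominant iff all its exponents are nonpositive. -/
def AntiDominant (m : (ℕ × ℤ) → ℤ) : Prop := ∀ x, m x ≤ 0

/-- `(i',k')` is in snake position with respect to `(i,k)`. -/
def SnakePos : Setting → ℕ × ℤ → ℕ × ℤ → Prop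
  | .A _, ik, ik' => |(ik'.1 : ℤ) - (ik.1 : ℤ)| + 2 ≤ ik'.2 - ik.2
  | .B n _, ik, ik' =>
      if ik.1 = n ∧ ik'.1 = n then
        2 ≤ ik'.2 - ik.2 ∧ (ik'.2 - ik.2) % 4 = 2
      else if ik.1 = n ∨ ik'.1 = n then
        2 * |(ik'.1 : ℤ) - (ik.1 : ℤ)| + 3 ≤ ik'.2 - ik.2 ∧
          (ik'.2 - ik.2) % 4 = (2 * |(ik'.1 : ℤ) - (ik.1 : ℤ)| - 1) % 4
      else
        2 * |(ik'.1 : ℤ) - (ik.1 : ℤ)| + 4 ≤ ik'.2 - ik.2 ∧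
          (ik'.2 - ik.2) % 4 = (2 * |(ik'.1 : ℤ) - (ik.1 : ℤ)|) % 4

/-- A snake: a sequence of points of `X`, each in snake position w.r.t. the previous one. -/
def IsSnake (S : Setting) {T : ℕ} (w : Fin T → ℕ × ℤ) : Prop :=
  (∀ t, w t ∈ X S) ∧
  ∀ (t : Fin T) (h : (t : ℕ) + 1 < T), SnakePos S (w t) (w ⟨(t : ℕ) + 1, h⟩)

/-- `p` is strictly above `p'`. -/
def StrictlyAbove (p p' : List (ℝ × ℝ)) : Prop :=
  ∀ a ∈ p, ∀ b ∈ p', a.1 = b.1 → a.2 < b.2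

/-- A tuple of paths is non-overlapping. -/
def NonOverlapping {T : ℕ} (ps : Fin T → List (ℝ × ℝ)) : Prop :=
  ∀ s t : Fin T, s < t → StrictlyAbove (ps s) (ps t)

/-- The set `𝒫̄` of non-overlapping tuples of paths attached to a snake. -/
def PBar (S : Setting) {T : ℕ} (w : Fin T → ℕ × ℤ) : Set (Fin T → List (ℝ × ℝ)) :=
  {ps | (∀ t, ps t ∈ P S (w t).1 (w t).2) ∧ NonOverlapping ps}

/-- The product `∏_t m(p_t)` of the monomials of a tuple of paths. -/
noncomputable def tmon (S : Setting) {T : ℕ} (ps : Fin T → List (ℝ × ℝ)) : (ℕ × ℤ) → ℤ :=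
  ∑ t, mon S (ps t)

/-- Lowering move at `jl` on a tuple of paths: one component is lowered, the others
are unchanged. -/
def TLoweredTo (S : Setting) {T : ℕ} (w : Fin T → ℕ × ℤ) (jl : ℕ × ℤ)
    (ps ps' : Fin T → List (ℝ × ℝ)) : Prop :=
  ∃ t, LoweredTo S (w t).1 (w t).2 jl.1 jl.2 (ps t) (ps' t) ∧ ∀ s, s ≠ t → ps' s = ps s

/-- Sequences of raising/lowering moves on a single path; the list records, for each move,
whether it was a lowering move (`true`) or a raising move (`false`), and its site. -/
inductive MoveSeq (S : Setting) (i : ℕ) (k : ℤ) :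
    List (ℝ × ℝ) → List (ℝ × ℝ) → List (Bool × (ℕ × ℤ)) → Prop where
  | nil (p : List (ℝ × ℝ)) : MoveSeq S i k p p []
  | lower {p q r : List (ℝ × ℝ)} {jl : ℕ × ℤ} {ms : List (Bool × (ℕ × ℤ))} :
      jl ∈ W S → LoweredTo S i k jl.1 jl.2 p q → MoveSeq S i k q r ms →
      MoveSeq S i k p r ((true, jl) :: ms)
  | raise {p q r : List (ℝ × ℝ)} {jl : ℕ × ℤ} {ms : List (Bool × (ℕ × ℤ))} :
      jl ∈ W S → LoweredTo S i k jl.1 jl.2 q p → MoveSeq S i k q r ms →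
      MoveSeq S i k p r ((false, jl) :: ms)

/-- Sequences of raising/lowering moves on tuples of paths, all of whose intermediate
tuples are non-overlapping. -/
inductive TMoveSeq (S : Setting) {T : ℕ} (w : Fin T → ℕ × ℤ) :
    (Fin T → List (ℝ × ℝ)) → (Fin T → List (ℝ × ℝ)) → List (Bool × (ℕ × ℤ)) → Prop where
  | nil (ps : Fin T → List (ℝ × ℝ)) : TMoveSeq S w ps ps []
  | lower {ps qs rs : Fin T → List (ℝ × ℝ)} {jl : ℕ × ℤ} {ms : List (Bool × (ℕ × ℤ))} :
      jl ∈ W S → TLoweredTo S w jl ps qs → NonOverlapping qs →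
      TMoveSeq S w qs rs ms → TMoveSeq S w ps rs ((true, jl) :: ms)
  | raise {ps qs rs : Fin T → List (ℝ × ℝ)} {jl : ℕ × ℤ} {ms : List (Bool × (ℕ × ℤ))} :
      jl ∈ W S → TLoweredTo S w jl qs ps → NonOverlapping qs →
      TMoveSeq S w qs rs ms → TMoveSeq S w ps rs ((false, jl) :: ms)

/-- Sequences of lowering moves on tuples of paths, all of whose intermediate tuples
are non-overlapping; the list records the sites, in order. -/
inductive TLowerSeq (S : Setting) {T : ℕ} (w : Fin T → ℕ × ℤ) :
    (Fin T → List (ℝ × ℝ)) → (Fin T → List (ℝ × ℝ)) → List (ℕ × ℤ) → Prop where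
  | nil (ps : Fin T → List (ℝ × ℝ)) : TLowerSeq S w ps ps []
  | cons {ps qs rs : Fin T → List (ℝ × ℝ)} {jl : ℕ × ℤ} {ms : List (ℕ × ℤ)} :
      jl ∈ W S → TLoweredTo S w jl ps qs → NonOverlapping qs →
      TLowerSeq S w qs rs ms → TLowerSeq S w ps rs (jl :: ms)

/-- Weak order on paths with the same x-coordinates: `p` is weakly above `p'`. -/
def WeaklyAbove (p p' : List (ℝ × ℝ)) : Prop :=
  p.length = p'.length ∧ ∀ r, r < p.length → (pt p r).2 ≤ (pt p' r).2

/-- `p` is weakly below `p'`. -/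
def WeaklyBelow (p p' : List (ℝ × ℝ)) : Prop :=
  p.length = p'.length ∧ ∀ r, r < p.length → (pt p' r).2 ≤ (pt p r).2

/-- The path `top(p, p')`. -/
def topPath (p p' : List (ℝ × ℝ)) : List (ℝ × ℝ) :=
  List.zipWith (fun a b => (a.1, min a.2 b.2)) p p'

/-- The distinguished point contained in the highest path `p⁺_{i,k}`. -/
def highPoint : Setting → ℕ → ℤ → ℝ × ℝ
  | .A _, i, k => ((i : ℝ), (k : ℝ))
  | .B n ε, i, k =>
      if i = n then (2 * (n : ℝ) - 1, (k : ℝ) - ε)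
      else (((iotaB n (i, k)).1 : ℝ), ((iotaB n (i, k)).2 : ℝ))

/-- The distinguished point contained in the lowest path `p⁻_{i,k}`. -/
def lowPoint : Setting → ℕ → ℤ → ℝ × ℝ
  | .A n, i, k => ((n : ℝ) + 1 - (i : ℝ), (k : ℝ) + (n : ℝ) + 1)
  | .B n ε, i, k =>
      if i = n then (2 * (n : ℝ) - 1, (k : ℝ) + 4 * (n : ℝ) - 2 + ε)
      else (((iotaB n (i, k + 4 * (n : ℤ) - 2)).1 : ℝ),
            ((iotaB n (i, k + 4 * (n : ℤ) - 2)).2 : ℝ))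

/-- The highest path `p⁺_{i,k}` : the path of `𝒫_{i,k}` with no lower corners. -/
noncomputable def highestPath (S : Setting) (i : ℕ) (k : ℤ) : List (ℝ × ℝ) :=
  Classical.epsilon fun p => p ∈ P S i k ∧ Cp S p false = ∅

/-- The lowest path `p⁻_{i,k}` : the path of `𝒫_{i,k}` with no upper corners. -/
noncomputable def lowestPath (S : Setting) (i : ℕ) (k : ℤ) : List (ℝ × ℝ) :=
  Classical.epsilon fun p => p ∈ P S i k ∧ Cp S p true = ∅




lemma pt_eq_getElem {p : List (ℝ × ℝ)} {r : ℕ} (h : r < p.length) : pt p r = p[r] :=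
  List.getD_eq_getElem p _ h

lemma pt_mem {p : List (ℝ × ℝ)} {r : ℕ} (h : r < p.length) : pt p r ∈ p := by
  rw [pt_eq_getElem h]; exact List.getElem_mem h

lemma mem_pt {p : List (ℝ × ℝ)} {x : ℝ × ℝ} (h : x ∈ p) : ∃ r, r < p.length ∧ pt p r = x := by
  obtain ⟨r, hr, hx⟩ := List.getElem_of_mem h
  exact ⟨r, hr, by rw [pt_eq_getElem hr, hx]⟩

lemma ind_of {s : Prop} (h : s) : ind s = 1 := by simp [ind, h]
lemma ind_not {s : Prop} (h : ¬ s) : ind s = 0 := by simp [ind, h]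
lemma ind_nonneg (s : Prop) : 0 ≤ ind s := by by_cases h : s <;> simp [ind_of, ind_not, h]
lemma ind_le_one (s : Prop) : ind s ≤ 1 := by by_cases h : s <;> simp [ind_of, ind_not, h]

section Seq
variable (y : ℕ → ℝ) (δ : ℝ) (M : ℕ)

lemma seq_down_chain (hd : ∀ j, j < M → y (j+1) = y j - δ) :
    ∀ b, b ≤ M → y b = y 0 - δ * b := by
  intro b hb
  induction b with
  | zero => simp
  | succ b ih =>
    rw [hd b (by omega), ih (by omega)]
    push_cast; ring

lemma seq_up_chain' (a : ℕ) (hd : ∀ j, a ≤ j → j < M → y (j+1) = y j + δ) :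
    ∀ b, a ≤ b → b ≤ M → y b = y a + δ * ((b : ℝ) - a) := by
  intro b hab hb
  induction b, hab using Nat.le_induction with
  | base => simp
  | succ b hb' ih =>
    rw [hd b hb' (by omega), ih (by omega)]
    push_cast; ring

lemma seq_bound (hδ' : 0 ≤ δ) (hstep : ∀ r, r < M → y (r+1) = y r + δ ∨ y (r+1) = y r - δ) :
    ∀ a b, a ≤ b → b ≤ M → y a - δ * ((b:ℝ) - a) ≤ y b ∧ y b ≤ y a + δ * ((b:ℝ) - a) := by
  intro a b hab hb
  induction b, hab using Nat.le_induction with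
  | base => simp
  | succ b hb' ih =>
    have h1 := ih (by omega)
    rcases hstep b (by omega) with h | h <;> rw [h] <;> push_cast <;>
      constructor <;> nlinarith [h1.1, h1.2]

variable (hδ : 0 < δ)
  (hstep : ∀ r, r < M → y (r+1) = y r + δ ∨ y (r+1) = y r - δ)
  (hnomax : ∀ r, 0 < r → r < M → ¬ (y (r-1) < y r ∧ y (r+1) < y r))

include hδ hstep hnomax in
lemma seq_up_prop : ∀ j, j < M → y (j+1) = y j + δ →
    ∀ j', j ≤ j' → j' < M → y (j'+1) = y j' + δ := by
  intro j hj hup j' hjj' hj'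
  induction j', hjj' using Nat.le_induction with
  | base => exact hup
  | succ j' hj'' ih =>
    have hu := ih (by omega)
    rcases hstep (j'+1) hj' with h | h
    · exact h
    · exfalso
      refine hnomax (j'+1) (by omega) hj' ⟨?_, ?_⟩
      · simpa [hu] using by linarith
      · rw [h]; linarith

include hδ hstep hnomax in
lemma seq_nomax_shape : ∀ r, r ≤ M → y r = max (y 0 - δ * r) (y M - δ * ((M:ℝ) - r)) := by
  intro r hr
  by_cases hall : ∀ j, j < r → y (j+1) = y j - δ
  · have h1 : y r = y 0 - δ * r := seq_down_chain y δ r (fun j hj => hall j hj) r le_rfl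
    have h2 := (seq_bound y δ M (le_of_lt hδ) hstep r M hr (le_refl M)).2
    rw [max_eq_left (by linarith)]
    exact h1
  · push_neg at hall
    obtain ⟨j, hjr, hnd⟩ := hall
    have hup : y (j+1) = y j + δ := by
      rcases hstep j (by omega) with h | h
      · exact h
      · exact absurd h hnd
    have hprop := seq_up_prop y δ M hδ hstep hnomax j (by omega) hup
    have h1 : y M = y r + δ * ((M:ℝ) - r) :=
      seq_up_chain' y δ M r (fun j' hj1 hj2 => hprop j' (by omega) hj2) M hr (le_refl M)
    have h2 := (seq_bound y δ M (le_of_lt hδ) hstep 0 r (by omega) hr).1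
    rw [max_eq_right (by push_cast at h2 ⊢; linarith)]
    linarith

include hδ hstep hnomax in
lemma seq_all_down (hM : 0 < M) (hdown : y M = y (M-1) - δ) :
    ∀ r, r ≤ M → y r = y 0 - δ * r := by
  have hall : ∀ j, j < M → y (j+1) = y j - δ := by
    intro j hj
    rcases hstep j hj with h | h
    · exfalso
      have := seq_up_prop y δ M hδ hstep hnomax j hj h (M-1) (by omega) (by omega)
      rw [show M - 1 + 1 = M by omega] at this
      rw [this] at hdown; linarith
    · exact h
  exact seq_down_chain y δ M hall

end Seq

/-! ### Generic sum lemmas -/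

lemma tmon_apply (S : Setting) {T : ℕ} (ps : Fin T → List (ℝ × ℝ)) (x : ℕ × ℤ) :
    tmon S ps x = ∑ t, (ind (x ∈ Cp S (ps t) true) - ind (x ∈ Cp S (ps t) false)) := by
  simp [tmon, mon, Finset.sum_apply]

lemma not_dom_of_corner {S : Setting} {T : ℕ} {ps : Fin T → List (ℝ × ℝ)} {x : ℕ × ℤ}
    (hD : Dominant (tmon S ps)) {t : Fin T} (ht : x ∈ Cp S (ps t) false)
    (hplus : ∀ s, x ∉ Cp S (ps s) true) : False := by
  have h0 := hD x
  rw [tmon_apply] at h0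
  have hle : ∑ s, (ind (x ∈ Cp S (ps s) true) - ind (x ∈ Cp S (ps s) false)) ≤
      ∑ s : Fin T, (if s = t then (-1 : ℤ) else 0) := by
    apply Finset.sum_le_sum
    intro s _
    by_cases hst : s = t
    · subst hst
      rw [if_pos rfl, ind_not (hplus s), ind_of ht]; omega
    · rw [if_neg hst, ind_not (hplus s)]
      have := ind_nonneg (x ∈ Cp S (ps s) false); omega
  rw [Finset.sum_ite_eq' Finset.univ t (fun _ => (-1:ℤ))] at hle
  simp only [Finset.mem_univ, if_true] at hle; omega

lemma not_antidom_of_corner {S : Setting} {T : ℕ} {ps : Fin T → List (ℝ × ℝ)} {x : ℕ × ℤ}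
    (hD : AntiDominant (tmon S ps)) {t : Fin T} (ht : x ∈ Cp S (ps t) true)
    (hminus : ∀ s, x ∉ Cp S (ps s) false) : False := by
  have h0 := hD x
  rw [tmon_apply] at h0
  have hle : ∑ s : Fin T, (if s = t then (1 : ℤ) else 0) ≤
      ∑ s, (ind (x ∈ Cp S (ps s) true) - ind (x ∈ Cp S (ps s) false)) := by
    apply Finset.sum_le_sum
    intro s _
    by_cases hst : s = t
    · subst hst
      rw [if_pos rfl, ind_not (hminus s), ind_of ht]; omega
    · rw [if_neg hst, ind_not (hminus s)]
      have := ind_nonneg (x ∈ Cp S (ps s) true); omega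
  rw [Finset.sum_ite_eq' Finset.univ t (fun _ => (1:ℤ))] at hle
  simp only [Finset.mem_univ, if_true] at hle; omega

lemma exists_plus_of_dom {S : Setting} {T : ℕ} {ps : Fin T → List (ℝ × ℝ)} {x : ℕ × ℤ}
    (hD : Dominant (tmon S ps)) {t : Fin T} (ht : x ∈ Cp S (ps t) false)
    (hpt : x ∉ Cp S (ps t) true) : ∃ s, s ≠ t ∧ x ∈ Cp S (ps s) true := by
  by_contra hc
  push_neg at hc
  exact not_dom_of_corner hD ht (fun s => by
    by_cases hst : s = t
    · subst hst; exact hpt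
    · exact hc s hst)

lemma exists_minus_of_antidom {S : Setting} {T : ℕ} {ps : Fin T → List (ℝ × ℝ)} {x : ℕ × ℤ}
    (hD : AntiDominant (tmon S ps)) {t : Fin T} (ht : x ∈ Cp S (ps t) true)
    (hpt : x ∉ Cp S (ps t) false) : ∃ s, s ≠ t ∧ x ∈ Cp S (ps s) false := by
  by_contra hc
  push_neg at hc
  exact not_antidom_of_corner hD ht (fun s => by
    by_cases hst : s = t
    · subst hst; exact hpt
    · exact hc s hst)

/-! ### Type A -/

section TypeA
variable {n i : ℕ} {k : ℤ} {p : List (ℝ × ℝ)}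

lemma memCpA {x : ℕ × ℤ} {up : Bool} :
    x ∈ Cp (.A n) p up ↔ (1 ≤ x.1 ∧ x.1 ≤ n ∧ pt p x.1 = ((x.1 : ℝ), (x.2 : ℝ)) ∧
      (pt p (x.1 - 1)).2 = (x.2 : ℝ) + (if up then 1 else -1) ∧
      (pt p (x.1 + 1)).2 = (x.2 : ℝ) + (if up then 1 else -1)) := Iff.rfl

lemma pathsA_int (hp : p ∈ pathsA n i k) : ∀ r, r ≤ n + 1 → ∃ m : ℤ, (pt p r).2 = (m : ℝ) := by
  obtain ⟨hl, hx, h0, hN, hstep⟩ := hp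
  intro r hr
  induction r with
  | zero => exact ⟨i + k, by rw [h0]; push_cast; ring⟩
  | succ r ih =>
    obtain ⟨m, hm⟩ := ih (by omega)
    rcases hstep r (by omega) with h | h
    · exact ⟨m + 1, by push_cast; linarith⟩
    · exact ⟨m - 1, by push_cast; linarith⟩

lemma A_nomax (hp : p ∈ pathsA n i k) (hC : ∀ x : ℕ × ℤ, x ∉ Cp (.A n) p false) :
    ∀ r, 0 < r → r < n + 1 →
      ¬ ((pt p (r-1)).2 < (pt p r).2 ∧ (pt p (r+1)).2 < (pt p r).2) := by
  intro r hr0 hr hcon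
  obtain ⟨hL, hR⟩ := hcon
  obtain ⟨m, hm⟩ := pathsA_int hp r (by omega)
  obtain ⟨hl, hx, h0, hN, hstep⟩ := hp
  have hstepL := hstep (r-1) (by omega)
  rw [show r - 1 + 1 = r by omega] at hstepL
  have hLeq : (pt p (r-1)).2 = (m:ℝ) - 1 := by
    rcases hstepL with h | h <;> linarith
  have hstepR := hstep r (by omega)
  have hReq : (pt p (r+1)).2 = (m:ℝ) - 1 := by
    rcases hstepR with h | h <;> linarith
  exact hC (r, m) (memCpA.mpr ⟨by omega, by omega,
    Prod.ext (hx r (by omega)) hm, by simpa [sub_eq_add_neg] using hLeq, by simpa [sub_eq_add_neg] using hReq⟩)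

lemma A_nomin (hp : p ∈ pathsA n i k) (hC : ∀ x : ℕ × ℤ, x ∉ Cp (.A n) p true) :
    ∀ r, 0 < r → r < n + 1 →
      ¬ ((pt p r).2 < (pt p (r-1)).2 ∧ (pt p r).2 < (pt p (r+1)).2) := by
  intro r hr0 hr hcon
  obtain ⟨hL, hR⟩ := hcon
  obtain ⟨m, hm⟩ := pathsA_int hp r (by omega)
  obtain ⟨hl, hx, h0, hN, hstep⟩ := hp
  have hstepL := hstep (r-1) (by omega)
  rw [show r - 1 + 1 = r by omega] at hstepL
  have hLeq : (pt p (r-1)).2 = (m:ℝ) + 1 := by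
    rcases hstepL with h | h <;> linarith
  have hstepR := hstep r (by omega)
  have hReq : (pt p (r+1)).2 = (m:ℝ) + 1 := by
    rcases hstepR with h | h <;> linarith
  exact hC (r, m) (memCpA.mpr ⟨by omega, by omega,
    Prod.ext (hx r (by omega)) hm, by simpa using hLeq, by simpa using hReq⟩)

lemma A_shape_high (hp : p ∈ pathsA n i k) (hC : ∀ x, x ∉ Cp (.A n) p false) :
    ∀ r, r ≤ n + 1 → (pt p r).2 = max ((i:ℝ) + k - r) ((k:ℝ) + r - i) := by
  intro r hr
  have hnm := A_nomax hp hC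
  have hst : ∀ r', r' < n+1 → (pt p (r'+1)).2 = (pt p r').2 + 1 ∨
      (pt p (r'+1)).2 = (pt p r').2 - 1 := by
    intro r' hr'
    rcases hp.2.2.2.2 r' (by omega) with h | h
    · left; linarith
    · right; linarith
  have := seq_nomax_shape (fun r => (pt p r).2) 1 (n+1) one_pos hst hnm r hr
  try simp only at this
  rw [this, hp.2.2.1, hp.2.2.2.1]
  congr 1 <;> push_cast <;> ring

lemma A_shape_low (hp : p ∈ pathsA n i k) (hC : ∀ x, x ∉ Cp (.A n) p true) :
    ∀ r, r ≤ n + 1 → (pt p r).2 = min ((i:ℝ) + k + r) ((k:ℝ) + 2*(n:ℝ) + 2 - i - r) := by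
  intro r hr
  have hnm := A_nomin hp hC
  have hnm' : ∀ r, 0 < r → r < n+1 →
      ¬ ((-(pt p (r-1)).2) < (-(pt p r).2) ∧ (-(pt p (r+1)).2) < (-(pt p r).2)) := by
    intro r h1 h2 hcon
    exact hnm r h1 h2 ⟨by linarith [hcon.1], by linarith [hcon.2]⟩
  have hst : ∀ r', r' < n+1 → (-(pt p (r'+1)).2) = (-(pt p r').2) + 1 ∨
      (-(pt p (r'+1)).2) = (-(pt p r').2) - 1 := by
    intro r' hr'
    rcases hp.2.2.2.2 r' (by omega) with h | h
    · right; linarith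
    · left; linarith
  have := seq_nomax_shape (fun r => -(pt p r).2) 1 (n+1) one_pos hst hnm' r hr
  try simp only at this
  rw [hp.2.2.1, hp.2.2.2.1] at this
  push_cast at this
  rw [show -((i:ℝ)+(k:ℝ)) - 1*(r:ℝ) = -((i:ℝ)+(k:ℝ)+(r:ℝ)) by ring] at this
  rw [show -((n:ℝ)+1-(i:ℝ)+(k:ℝ)) - 1*((n:ℝ)+1-(r:ℝ)) =
    -((k:ℝ) + 2*(n:ℝ) + 2 - (i:ℝ) - (r:ℝ)) by ring] at this
  rw [max_neg_neg] at this
  exact neg_injective this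

lemma A_unique {q : List (ℝ × ℝ)} (hp : p ∈ pathsA n i k) (hq : q ∈ pathsA n i k)
    (hCp : ∀ x, x ∉ Cp (.A n) p false) (hCq : ∀ x, x ∉ Cp (.A n) q false) : p = q := by
  apply List.ext_getElem (by rw [hp.1, hq.1])
  intro r h1 h2
  have hr : r ≤ n + 1 := by rw [hp.1] at h1; omega
  rw [← pt_eq_getElem h1, ← pt_eq_getElem h2]
  have e1 := A_shape_high hp hCp r hr
  have e2 := A_shape_high hq hCq r hr
  have x1 := hp.2.1 r (by omega)
  have x2 := hq.2.1 r (by omega)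
  exact Prod.ext (by rw [x1, x2]) (by rw [e1, e2])

lemma A_unique_low {q : List (ℝ × ℝ)} (hp : p ∈ pathsA n i k) (hq : q ∈ pathsA n i k)
    (hCp : ∀ x, x ∉ Cp (.A n) p true) (hCq : ∀ x, x ∉ Cp (.A n) q true) : p = q := by
  apply List.ext_getElem (by rw [hp.1, hq.1])
  intro r h1 h2
  have hr : r ≤ n + 1 := by rw [hp.1] at h1; omega
  rw [← pt_eq_getElem h1, ← pt_eq_getElem h2]
  have e1 := A_shape_low hp hCp r hr
  have e2 := A_shape_low hq hCq r hr
  have x1 := hp.2.1 r (by omega)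
  have x2 := hq.2.1 r (by omega)
  exact Prod.ext (by rw [x1, x2]) (by rw [e1, e2])

lemma A_corner_pt {x : ℕ × ℤ} {up : Bool} (h : x ∈ Cp (.A n) p up) :
    (((x.1:ℝ), (x.2:ℝ)) : ℝ × ℝ) ∈ p := by
  rw [memCpA] at h
  obtain ⟨h1, _, h3, _, _⟩ := h
  by_cases hr : x.1 < p.length
  · rw [← h3]; exact pt_mem hr
  · exfalso
    have hd : pt p x.1 = ((0:ℝ), (0:ℝ)) := List.getD_eq_default p _ (by omega)
    rw [hd] at h3
    have : ((x.1:ℝ)) = 0 := (congrArg Prod.fst h3).symm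
    have : (x.1 : ℕ) = 0 := by exact_mod_cast this
    omega

lemma A_not_both {x : ℕ × ℤ} (h1 : x ∈ Cp (.A n) p true) (h2 : x ∈ Cp (.A n) p false) :
    False := by
  rw [memCpA] at h1 h2
  have a1 := h1.2.2.2.1
  have a2 := h2.2.2.2.1
  rw [a2] at a1
  simp at a1
  linarith

lemma A_noCorner {T : ℕ} {w : Fin T → ℕ × ℤ} {ps : Fin T → List (ℝ × ℝ)}
    (hps : ps ∈ PBar (.A n) w) (hD : Dominant (tmon (.A n) ps)) (t : Fin T) :
    ∀ x, x ∉ Cp (.A n) (ps t) false := by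
  intro x hx
  apply not_dom_of_corner hD hx
  intro s hs
  have hpt1 := A_corner_pt hs
  have hpt2 := A_corner_pt hx
  rcases lt_trichotomy s t with h | h | h
  · exact lt_irrefl _ (hps.2 s t h _ hpt1 _ hpt2 rfl)
  · subst h; exact A_not_both hs hx
  · exact lt_irrefl _ (hps.2 t s h _ hpt2 _ hpt1 rfl)

lemma A_noCorner_low {T : ℕ} {w : Fin T → ℕ × ℤ} {ps : Fin T → List (ℝ × ℝ)}
    (hps : ps ∈ PBar (.A n) w) (hD : AntiDominant (tmon (.A n) ps)) (t : Fin T) :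
    ∀ x, x ∉ Cp (.A n) (ps t) true := by
  intro x hx
  apply not_antidom_of_corner hD hx
  intro s hs
  have hpt1 := A_corner_pt hs
  have hpt2 := A_corner_pt hx
  rcases lt_trichotomy s t with h | h | h
  · exact lt_irrefl _ (hps.2 s t h _ hpt1 _ hpt2 rfl)
  · subst h; exact A_not_both hx hs
  · exact lt_irrefl _ (hps.2 t s h _ hpt2 _ hpt1 rfl)

lemma mainA {T : ℕ} {w : Fin T → ℕ × ℤ} {ps : Fin T → List (ℝ × ℝ)}
    (hps : ps ∈ PBar (.A n) w) :
    (Dominant (tmon (.A n) ps) → ps = fun t => highestPath (.A n) (w t).1 (w t).2) ∧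
    (AntiDominant (tmon (.A n) ps) → ps = fun t => lowestPath (.A n) (w t).1 (w t).2) := by
  constructor
  · intro hD
    funext t
    have hC := A_noCorner hps hD t
    have hPmem : ps t ∈ pathsA n (w t).1 (w t).2 := hps.1 t
    have hsat : ∃ p, p ∈ P (.A n) (w t).1 (w t).2 ∧ Cp (.A n) p false = ∅ :=
      ⟨ps t, hps.1 t, Set.eq_empty_iff_forall_notMem.mpr hC⟩
    have hspec := Classical.epsilon_spec hsat
    exact A_unique hPmem hspec.1 hC (Set.eq_empty_iff_forall_notMem.mp hspec.2)
  · intro hD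
    funext t
    have hC := A_noCorner_low hps hD t
    have hPmem : ps t ∈ pathsA n (w t).1 (w t).2 := hps.1 t
    have hsat : ∃ p, p ∈ P (.A n) (w t).1 (w t).2 ∧ Cp (.A n) p true = ∅ :=
      ⟨ps t, hps.1 t, Set.eq_empty_iff_forall_notMem.mpr hC⟩
    have hspec := Classical.epsilon_spec hsat
    exact A_unique_low hPmem hspec.1 hC (Set.eq_empty_iff_forall_notMem.mp hspec.2)

end TypeA

/-! ### Type B : spin path basics -/

section TypeB
variable {n : ℕ} {ε : ℝ} {l k : ℤ} {q p : List (ℝ × ℝ)}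

lemma memCpB {x : ℕ × ℤ} {up : Bool} :
    x ∈ Cp (.B n ε) p up ↔ (x ∈ XB n ∧
      ((∃ r : ℕ, 1 ≤ r ∧ r + 1 < p.length ∧
          pt p r = (((iotaB n x).1 : ℝ), ((iotaB n x).2 : ℝ)) ∧
          (iotaB n x).1 ≠ 0 ∧ (iotaB n x).1 ≠ 2 * (n : ℤ) - 1 ∧
          (iotaB n x).1 ≠ 4 * (n : ℤ) - 2 ∧
          (if up then (pt p r).2 < (pt p (r - 1)).2 ∧ (pt p r).2 < (pt p (r + 1)).2
           else (pt p (r - 1)).2 < (pt p r).2 ∧ (pt p (r + 1)).2 < (pt p r).2))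
       ∨ (x.1 = n ∧
          (if up then (2 * (n : ℝ) - 1, (x.2 : ℝ) - ε) ∈ p ∧ (2 * (n : ℝ) - 1, (x.2 : ℝ) + ε) ∉ p
           else (2 * (n : ℝ) - 1, (x.2 : ℝ) + ε) ∈ p ∧ (2 * (n : ℝ) - 1, (x.2 : ℝ) - ε) ∉ p)))) :=
  Iff.rfl

/-- Integrality / parity / bounds for the `2`-step part of a spin path. -/
lemma Mspin (hq : q ∈ pathsBspin n ε l) :
    ∀ r, r ≤ n - 1 → ∃ m : ℤ, (pt q r).2 = ((l + 2*n - 1 + 2*m : ℤ) : ℝ) ∧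
      m % 2 = (r:ℤ) % 2 ∧ -(r:ℤ) ≤ m ∧ m ≤ r := by
  obtain ⟨hlen, hxor, hxn, h0, hstep, hlast⟩ := hq
  intro r hr
  induction r with
  | zero =>
    refine ⟨0, ?_, by norm_num, by norm_num, by norm_num⟩
    rw [h0]; push_cast; ring
  | succ r ih =>
    obtain ⟨m, hm, hpar, hlb, hub⟩ := ih (by omega)
    rcases hstep r (by omega) with h | h
    · exact ⟨m + 1, by push_cast at hm ⊢; linarith, by omega, by omega, by omega⟩
    · exact ⟨m - 1, by push_cast at hm ⊢; linarith, by omega, by omega, by omega⟩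

lemma spin_len (hq : q ∈ pathsBspin n ε l) : q.length = n + 1 := hq.1
lemma spin_xn (hq : q ∈ pathsBspin n ε l) : (pt q n).1 = 2*(n:ℝ) - 1 := hq.2.2.1
lemma spin_y0 (hq : q ∈ pathsBspin n ε l) : (pt q 0).2 = (l:ℝ) + 2*(n:ℝ) - 1 := hq.2.2.2.1
lemma spin_step (hq : q ∈ pathsBspin n ε l) : ∀ r, r + 2 ≤ n →
    (pt q (r+1)).2 - (pt q r).2 = 2 ∨ (pt q (r+1)).2 - (pt q r).2 = -2 := hq.2.2.2.2.1
lemma spin_last (hq : q ∈ pathsBspin n ε l) :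
    (pt q n).2 - (pt q (n-1)).2 = 1 + ε ∨ (pt q n).2 - (pt q (n-1)).2 = -(1+ε) :=
  hq.2.2.2.2.2

lemma spin_x3 (hq : q ∈ pathsBspin n ε l) (h3 : l % 4 = 3) :
    ∀ r, r < n → (pt q r).1 = 2*(r:ℝ) := by
  have := hq.2.1; rw [if_pos h3] at this; exact this

lemma spin_x1 (hq : q ∈ pathsBspin n ε l) (h1 : ¬ (l % 4 = 3)) :
    ∀ r, r < n → (pt q r).1 = 4*(n:ℝ) - 2 - 2*(r:ℝ) := by
  have := hq.2.1; rw [if_neg h1] at this; exact this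

/-- A spin path has no local maximum among its `±2`-steps part. -/
def NoMaxQ (n : ℕ) (q : List (ℝ × ℝ)) : Prop :=
  ∀ r, 1 ≤ r → r ≤ n - 1 → ¬ ((pt q (r-1)).2 < (pt q r).2 ∧ (pt q (r+1)).2 < (pt q r).2)

def NoMinQ (n : ℕ) (q : List (ℝ × ℝ)) : Prop :=
  ∀ r, 1 ≤ r → r ≤ n - 1 → ¬ ((pt q r).2 < (pt q (r-1)).2 ∧ (pt q r).2 < (pt q (r+1)).2)

variable (hn : 2 ≤ n) (hε : 0 < ε ∧ ε < 1/2)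

/-- steps of a spin path as `seq` steps, `M = n-1`, `δ = 2`. -/
lemma spin_seq_step (hq : q ∈ pathsBspin n ε l) :
    ∀ r, r < n - 1 → (pt q (r+1)).2 = (pt q r).2 + 2 ∨ (pt q (r+1)).2 = (pt q r).2 - 2 := by
  intro r hr
  rcases spin_step hq r (by omega) with h | h
  · left; linarith
  · right; linarith

lemma spin_seq_nomax (hnm : NoMaxQ n q) :
    ∀ r, 0 < r → r < n - 1 → ¬ ((pt q (r-1)).2 < (pt q r).2 ∧ (pt q (r+1)).2 < (pt q r).2) :=
  fun r h1 h2 => hnm r h1 (by omega)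

include hn hε in
/-- E3 : no local max and last step down ⇒ all-down spin path. -/
lemma spin_all_down (hq : q ∈ pathsBspin n ε l) (hnm : NoMaxQ n q)
    (hlast : (pt q n).2 - (pt q (n-1)).2 = -(1+ε)) :
    (∀ r, r ≤ n - 1 → (pt q r).2 = (l:ℝ) + 2*(n:ℝ) - 1 - 2*(r:ℝ)) ∧
      (pt q n).2 = (l:ℝ) - ε := by
  have hd2 : (pt q (n-1)).2 = (pt q (n-2)).2 - 2 := by
    rcases spin_step hq (n-2) (by omega) with h | h
    · exfalso
      apply hnm (n-1) (by omega) (by omega)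
      rw [show n - 1 - 1 = n - 2 by omega, show n - 1 + 1 = n by omega]
      constructor
      · rw [show n - 2 + 1 = n - 1 by omega] at h; linarith
      · linarith [hε.1]
    · rw [show n - 2 + 1 = n - 1 by omega] at h; linarith
  have := seq_all_down (fun r => (pt q r).2) 2 (n-1) two_pos (spin_seq_step hq)
    (spin_seq_nomax hnm) (by omega) (by rw [show n - 1 - 1 = n - 2 by omega]; exact hd2)
  have hall : ∀ r, r ≤ n - 1 → (pt q r).2 = (l:ℝ) + 2*(n:ℝ) - 1 - 2*(r:ℝ) := by
    intro r hr
    have h := this r hr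
    try simp only at h
    rw [h, spin_y0 hq]; try ring
  refine ⟨hall, ?_⟩
  have h1 := hall (n-1) le_rfl
  have : ((n:ℝ) - 1) = ((n-1 : ℕ) : ℝ) := by push_cast [Nat.cast_sub (by omega : 1 ≤ n)]; ring
  rw [show (pt q n).2 = (pt q (n-1)).2 - (1+ε) by linarith, h1]
  push_cast [Nat.cast_sub (by omega : 1 ≤ n)]
  ring

include hn hε in
/-- E5 : no local min and last step up ⇒ all-up spin path. -/
lemma spin_all_up (hq : q ∈ pathsBspin n ε l) (hnm : NoMinQ n q)
    (hlast : (pt q n).2 - (pt q (n-1)).2 = 1+ε) :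
    (∀ r, r ≤ n - 1 → (pt q r).2 = (l:ℝ) + 2*(n:ℝ) - 1 + 2*(r:ℝ)) ∧
      (pt q n).2 = (l:ℝ) + 4*(n:ℝ) - 2 + ε := by
  have hd2 : (pt q (n-1)).2 = (pt q (n-2)).2 + 2 := by
    rcases spin_step hq (n-2) (by omega) with h | h
    · rw [show n - 2 + 1 = n - 1 by omega] at h; linarith
    · exfalso
      apply hnm (n-1) (by omega) (by omega)
      rw [show n - 1 - 1 = n - 2 by omega, show n - 1 + 1 = n by omega]
      constructor
      · rw [show n - 2 + 1 = n - 1 by omega] at h; linarith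
      · linarith [hε.1]
  have hstep' : ∀ r, r < n - 1 →
      (-(pt q (r+1)).2) = (-(pt q r).2) + 2 ∨ (-(pt q (r+1)).2) = (-(pt q r).2) - 2 := by
    intro r hr
    rcases spin_seq_step hq r hr with h | h
    · right; rw [h]; ring
    · left; rw [h]; ring
  have hnm' : ∀ r, 0 < r → r < n - 1 →
      ¬ ((-(pt q (r-1)).2) < (-(pt q r).2) ∧ (-(pt q (r+1)).2) < (-(pt q r).2)) := by
    intro r h1 h2 hcon
    exact hnm r h1 (by omega) ⟨by linarith [hcon.1], by linarith [hcon.2]⟩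
  have := seq_all_down (fun r => -(pt q r).2) 2 (n-1) two_pos hstep' hnm' (by omega)
    (by rw [show n - 1 - 1 = n - 2 by omega]; (try simp only); rw [hd2]; ring)
  have hall : ∀ r, r ≤ n - 1 → (pt q r).2 = (l:ℝ) + 2*(n:ℝ) - 1 + 2*(r:ℝ) := by
    intro r hr
    have h := this r hr
    try simp only at h
    have := spin_y0 hq
    nlinarith [h]
  refine ⟨hall, ?_⟩
  have h1 := hall (n-1) le_rfl
  push_cast [Nat.cast_sub (by omega : 1 ≤ n)] at h1
  linarith

include hn in
/-- E1 : the endpoint of a spin path whose last step is up. -/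
lemma spin_end_up (hq : q ∈ pathsBspin n ε l) (hodd : l % 2 = 1)
    (hlast : (pt q n).2 - (pt q (n-1)).2 = 1+ε) :
    ∃ c : ℤ, c % 2 = 1 ∧ (pt q n).2 = (c:ℝ) + ε ∧ l + 2 ≤ c ∧ c ≤ l + 4*n - 2 ∧
      (pt q (n-1)).2 = ((c - 1 : ℤ) : ℝ) := by
  obtain ⟨m, hm, hpar, hlb, hub⟩ := Mspin hq (n-1) le_rfl
  refine ⟨l + 2*n + 2*m, by omega, ?_, ?_, ?_, ?_⟩
  · rw [show (pt q n).2 = (pt q (n-1)).2 + (1+ε) by linarith, hm]; push_cast; ring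
  · push_cast [Nat.cast_sub (by omega : 1 ≤ n)] at hlb; omega
  · push_cast [Nat.cast_sub (by omega : 1 ≤ n)] at hub; omega
  · rw [hm]; push_cast; ring

include hn in
/-- E2 : the endpoint of a spin path whose last step is down. -/
lemma spin_end_down (hq : q ∈ pathsBspin n ε l) (hodd : l % 2 = 1)
    (hlast : (pt q n).2 - (pt q (n-1)).2 = -(1+ε)) :
    ∃ c : ℤ, c % 2 = 1 ∧ (pt q n).2 = (c:ℝ) - ε ∧ l ≤ c ∧ c ≤ l + 4*n - 4 ∧
      (pt q (n-1)).2 = ((c + 1 : ℤ) : ℝ) := by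
  obtain ⟨m, hm, hpar, hlb, hub⟩ := Mspin hq (n-1) le_rfl
  refine ⟨l + 2*n - 2 + 2*m, by omega, ?_, ?_, ?_, ?_⟩
  · rw [show (pt q n).2 = (pt q (n-1)).2 - (1+ε) by linarith, hm]; push_cast; ring
  · push_cast [Nat.cast_sub (by omega : 1 ≤ n)] at hlb; omega
  · push_cast [Nat.cast_sub (by omega : 1 ≤ n)] at hub; omega
  · rw [hm]; push_cast; ring

include hn in
/-- E4 : shape of a spin path with no local max. -/
lemma spin_shape_max (hq : q ∈ pathsBspin n ε l) (hnm : NoMaxQ n q) :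
    ∀ r, r ≤ n - 1 → (pt q r).2 =
      max ((l:ℝ) + 2*(n:ℝ) - 1 - 2*(r:ℝ)) ((pt q (n-1)).2 - 2*((n:ℝ) - 1 - (r:ℝ))) := by
  intro r hr
  have hc : (((n:ℕ) - 1 : ℕ) : ℝ) = (n:ℝ) - 1 := by
    push_cast [Nat.cast_sub (by omega : 1 ≤ n)]; ring
  have := seq_nomax_shape (fun r => (pt q r).2) 2 (n-1) two_pos (spin_seq_step hq)
    (spin_seq_nomax hnm) r hr
  try simp only at this
  rw [this, spin_y0 hq, hc]
  try congr 1 <;> ring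

include hn in
/-- E6 : shape of a spin path with no local min. -/
lemma spin_shape_min (hq : q ∈ pathsBspin n ε l) (hnm : NoMinQ n q) :
    ∀ r, r ≤ n - 1 → (pt q r).2 =
      min ((l:ℝ) + 2*(n:ℝ) - 1 + 2*(r:ℝ)) ((pt q (n-1)).2 + 2*((n:ℝ) - 1 - (r:ℝ))) := by
  intro r hr
  have hc : (((n:ℕ) - 1 : ℕ) : ℝ) = (n:ℝ) - 1 := by
    push_cast [Nat.cast_sub (by omega : 1 ≤ n)]; ring
  have hstep' : ∀ r, r < n - 1 →
      (-(pt q (r+1)).2) = (-(pt q r).2) + 2 ∨ (-(pt q (r+1)).2) = (-(pt q r).2) - 2 := by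
    intro r hr
    rcases spin_seq_step hq r hr with h | h
    · right; rw [h]; ring
    · left; rw [h]; ring
  have hnm' : ∀ r, 0 < r → r < n - 1 →
      ¬ ((-(pt q (r-1)).2) < (-(pt q r).2) ∧ (-(pt q (r+1)).2) < (-(pt q r).2)) := by
    intro r h1 h2 hcon
    exact hnm r h1 (by omega) ⟨by linarith [hcon.1], by linarith [hcon.2]⟩
  have := seq_nomax_shape (fun r => -(pt q r).2) 2 (n-1) two_pos hstep' hnm' r hr
  try simp only at this
  rw [spin_y0 hq, hc] at this
  rw [show -((l:ℝ)+2*(n:ℝ)-1) - 2*(r:ℝ) = -((l:ℝ)+2*(n:ℝ)-1+2*(r:ℝ)) by ring,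
      show -(pt q (n-1)).2 - 2*((n:ℝ)-1-(r:ℝ)) = -((pt q (n-1)).2 + 2*((n:ℝ)-1-(r:ℝ))) by ring,
      max_neg_neg] at this
  exact neg_injective this

end TypeB

/-! ### Type B : combined paths -/

section TypeBComb
variable {n : ℕ} {ε : ℝ} {i : ℕ} {k : ℤ} {p a b : List (ℝ × ℝ)}

lemma comb_decomp (hi : i ≠ n) (hp : p ∈ pathsB n ε i k) :
    ∃ a b, a ∈ pathsBspin n ε (k - (2*(n:ℤ) - 2*(i:ℤ) - 1)) ∧
      b ∈ pathsBspin n ε (k + (2*(n:ℤ) - 2*(i:ℤ) - 1)) ∧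
      p = a ++ b.reverse ∧ 0 < (pt a n).2 - (pt b n).2 := by
  rw [pathsB, if_neg hi] at hp
  obtain ⟨a, b, h1, h2, h3, _, h5⟩ := hp
  exact ⟨a, b, h1, h2, h3, h5⟩

lemma spin_mem (hi : i = n) (hp : p ∈ pathsB n ε i k) : p ∈ pathsBspin n ε k := by
  rw [pathsB, if_pos hi] at hp; exact hp

variable (ha : a ∈ pathsBspin n ε (k - (2*(n:ℤ) - 2*(i:ℤ) - 1)))
  (hb : b ∈ pathsBspin n ε (k + (2*(n:ℤ) - 2*(i:ℤ) - 1)))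
  (hab : p = a ++ b.reverse)

include ha hb hab in
lemma comb_len : p.length = 2*n + 2 := by
  rw [hab]; simp [spin_len ha, spin_len hb]; omega

include ha hb hab in
lemma comb_pt_a : ∀ r, r ≤ n → pt p r = pt a r := by
  intro r hr
  subst hab
  have h1 : r < a.length := by rw [spin_len ha]; omega
  have h2 : r < (a ++ b.reverse).length := by
    rw [comb_len ha hb rfl]; omega
  rw [pt_eq_getElem h1, pt_eq_getElem h2]
  exact List.getElem_append_left h1

include ha hb hab in
lemma comb_pt_b : ∀ u, u ≤ n → pt p (2*n+1-u) = pt b u := by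
  intro u hu
  have hbl : b.length = n + 1 := spin_len hb
  have h1 : u < b.length := by omega
  have h2 : 2*n+1-u < p.length := by rw [comb_len ha hb hab]; omega
  rw [pt_eq_getElem h1, pt_eq_getElem h2]
  subst hab
  rw [List.getElem_append_right (by rw [spin_len ha]; omega)]
  rw [List.getElem_reverse]
  congr 1
  rw [spin_len ha]
  simp [hbl]
  omega

include ha hb hab in
lemma comb_pt_b' : ∀ r, n + 1 ≤ r → r ≤ 2*n+1 → pt p r = pt b (2*n+1-r) := by
  intro r h1 h2
  have := comb_pt_b ha hb hab (2*n+1-r) (by omega)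
  rw [show 2*n+1-(2*n+1-r) = r from by omega] at this
  exact this

include ha hb hab in
lemma comb_xn1 : (pt p n).1 = 2*(n:ℝ) - 1 ∧ (pt p (n+1)).1 = 2*(n:ℝ) - 1 := by
  constructor
  · rw [comb_pt_a ha hb hab n le_rfl]; exact spin_xn ha
  · rw [show n+1 = 2*n+1-n by omega, comb_pt_b ha hb hab n le_rfl]; exact spin_xn hb

include ha hb hab in
lemma comb_vals : pt p n = pt a n ∧ pt p (n+1) = pt b n :=
  ⟨comb_pt_a ha hb hab n le_rfl, by rw [show n+1 = 2*n+1-n by omega]; exact comb_pt_b ha hb hab n le_rfl⟩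

variable (hn : 2 ≤ n) (hi : i < n) (hk : k % 2 = 0)

include hk hn hi in
lemma comb_orient : ((k - (2*(n:ℤ) - 2*(i:ℤ) - 1)) % 4 = 3) ↔
    ¬ ((k + (2*(n:ℤ) - 2*(i:ℤ) - 1)) % 4 = 3) := by omega

include ha hb hab hn hi hk in
lemma comb_x_3 (h3 : (k - (2*(n:ℤ) - 2*(i:ℤ) - 1)) % 4 = 3) :
    (∀ r, r < n → (pt p r).1 = 2*(r:ℝ)) ∧
    (∀ r, n + 2 ≤ r → r ≤ 2*n+1 → (pt p r).1 = 2*(r:ℝ) - 4) := by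
  have hb4 : ¬ ((k + (2*(n:ℤ) - 2*(i:ℤ) - 1)) % 4 = 3) := (comb_orient hn hi hk).mp h3
  constructor
  · intro r hr
    rw [comb_pt_a ha hb hab r (by omega)]
    exact spin_x3 ha h3 r hr
  · intro r h1 h2
    rw [comb_pt_b' ha hb hab r (by omega) h2]
    rw [spin_x1 hb hb4 (2*n+1-r) (by omega)]
    have : ((2*n+1-r : ℕ) : ℝ) = 2*(n:ℝ) + 1 - (r:ℝ) := by
      push_cast [Nat.cast_sub (by omega : r ≤ 2*n+1)]; ring
    rw [this]; ring

include ha hb hab hn hi hk in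
lemma comb_x_1 (h3 : ¬ ((k - (2*(n:ℤ) - 2*(i:ℤ) - 1)) % 4 = 3)) :
    (∀ r, r < n → (pt p r).1 = 4*(n:ℝ) - 2 - 2*(r:ℝ)) ∧
    (∀ r, n + 2 ≤ r → r ≤ 2*n+1 → (pt p r).1 = 4*(n:ℝ) + 2 - 2*(r:ℝ)) := by
  have hb4 : ((k + (2*(n:ℤ) - 2*(i:ℤ) - 1)) % 4 = 3) := by
    by_contra hc; exact h3 ((comb_orient hn hi hk).mpr hc)
  constructor
  · intro r hr
    rw [comb_pt_a ha hb hab r (by omega)]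
    exact spin_x1 ha h3 r hr
  · intro r h1 h2
    rw [comb_pt_b' ha hb hab r (by omega) h2]
    rw [spin_x3 hb hb4 (2*n+1-r) (by omega)]
    have : ((2*n+1-r : ℕ) : ℝ) = 2*(n:ℝ) + 1 - (r:ℝ) := by
      push_cast [Nat.cast_sub (by omega : r ≤ 2*n+1)]; ring
    rw [this]; ring

include ha hb hab hn hi hk in
/-- injectivity of x-coordinates of a combined path away from `2n-1`. -/
lemma comb_inj {r r' : ℕ} (hr : r < 2*n+2) (hr' : r' < 2*n+2)
    (heq : (pt p r).1 = (pt p r').1) (hne : (pt p r).1 ≠ 2*(n:ℝ) - 1) : r = r' := by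
  have hxn := comb_xn1 ha hb hab
  have hrn : r ≠ n ∧ r ≠ n + 1 := by
    constructor <;> rintro rfl <;> [exact hne hxn.1; exact hne hxn.2]
  have hrn' : r' ≠ n ∧ r' ≠ n + 1 := by
    constructor <;> rintro rfl <;>
      [exact hne (heq.trans hxn.1); exact hne (heq.trans hxn.2)]
  by_contra hner
  rcases em ((k - (2*(n:ℤ) - 2*(i:ℤ) - 1)) % 4 = 3) with h3 | h3
  · obtain ⟨hA, hB⟩ := comb_x_3 ha hb hab hn hi hk h3
    rcases Nat.lt_or_ge r n with c1 | c1 <;> rcases Nat.lt_or_ge r' n with c2 | c2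
    · rw [hA r c1, hA r' c2] at heq
      have : (r:ℝ) = (r':ℝ) := by linarith
      exact hner (by exact_mod_cast this)
    · rw [hA r c1, hB r' (by omega) (by omega)] at heq
      have : ((2*r : ℤ) : ℝ) = ((2*r' - 4 : ℤ) : ℝ) := by push_cast; linarith
      have := Int.cast_injective this; omega
    · rw [hB r (by omega) (by omega), hA r' c2] at heq
      have : ((2*r - 4 : ℤ) : ℝ) = ((2*r' : ℤ) : ℝ) := by push_cast; linarith
      have := Int.cast_injective this; omega
    · rw [hB r (by omega) (by omega), hB r' (by omega) (by omega)] at heq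
      have : (r:ℝ) = (r':ℝ) := by linarith
      exact hner (by exact_mod_cast this)
  · obtain ⟨hA, hB⟩ := comb_x_1 ha hb hab hn hi hk h3
    rcases Nat.lt_or_ge r n with c1 | c1 <;> rcases Nat.lt_or_ge r' n with c2 | c2
    · rw [hA r c1, hA r' c2] at heq
      have : (r:ℝ) = (r':ℝ) := by linarith
      exact hner (by exact_mod_cast this)
    · rw [hA r c1, hB r' (by omega) (by omega)] at heq
      have : ((4*(n:ℤ) - 2 - 2*r : ℤ) : ℝ) = ((4*(n:ℤ) + 2 - 2*r' : ℤ) : ℝ) := by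
        push_cast; linarith
      have := Int.cast_injective this; omega
    · rw [hB r (by omega) (by omega), hA r' c2] at heq
      have : ((4*(n:ℤ) + 2 - 2*r : ℤ) : ℝ) = ((4*(n:ℤ) - 2 - 2*r' : ℤ) : ℝ) := by
        push_cast; linarith
      have := Int.cast_injective this; omega
    · rw [hB r (by omega) (by omega), hB r' (by omega) (by omega)] at heq
      have : (r:ℝ) = (r':ℝ) := by linarith
      exact hner (by exact_mod_cast this)

include ha hb hab hn hi hk in
/-- the only points of a combined path on the line `x = 2n-1` are the two endpoints. -/
lemma comb_val_at {v : ℝ} (hv : ((2*(n:ℝ) - 1, v) : ℝ × ℝ) ∈ p) :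
    v = (pt a n).2 ∨ v = (pt b n).2 := by
  obtain ⟨r, hr, hptr⟩ := mem_pt hv
  rw [comb_len ha hb hab] at hr
  have hx : (pt p r).1 = 2*(n:ℝ) - 1 := by rw [hptr]
  have hvv : (pt p r).2 = v := by rw [hptr]
  have hvals := comb_vals ha hb hab
  have hrn : r = n ∨ r = n + 1 := by
    by_contra hc
    push_neg at hc
    rcases em ((k - (2*(n:ℤ) - 2*(i:ℤ) - 1)) % 4 = 3) with h3 | h3
    · obtain ⟨hA, hB⟩ := comb_x_3 ha hb hab hn hi hk h3
      rcases Nat.lt_or_ge r n with c1 | c1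
      · rw [hA r c1] at hx
        have : ((2*r : ℤ) : ℝ) = ((2*(n:ℤ) - 1 : ℤ) : ℝ) := by push_cast; linarith
        have := Int.cast_injective this; omega
      · rw [hB r (by omega) (by omega)] at hx
        have : ((2*r - 4 : ℤ) : ℝ) = ((2*(n:ℤ) - 1 : ℤ) : ℝ) := by push_cast; linarith
        have := Int.cast_injective this; omega
    · obtain ⟨hA, hB⟩ := comb_x_1 ha hb hab hn hi hk h3
      rcases Nat.lt_or_ge r n with c1 | c1
      · rw [hA r c1] at hx
        have : ((4*(n:ℤ) - 2 - 2*r : ℤ) : ℝ) = ((2*(n:ℤ) - 1 : ℤ) : ℝ) := by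
          push_cast; linarith
        have := Int.cast_injective this; omega
      · rw [hB r (by omega) (by omega)] at hx
        have : ((4*(n:ℤ) + 2 - 2*r : ℤ) : ℝ) = ((2*(n:ℤ) - 1 : ℤ) : ℝ) := by
          push_cast; linarith
        have := Int.cast_injective this; omega
  rcases hrn with rfl | rfl
  · left; rw [← hvv, hvals.1]
  · right; rw [← hvv, hvals.2]

end TypeBComb

section TypeBSpinPath
variable {n : ℕ} {ε : ℝ} {k : ℤ} {p : List (ℝ × ℝ)}

lemma spin_x_ne (hp : p ∈ pathsBspin n ε k) {r : ℕ} (hr : r < n) :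
    (pt p r).1 ≠ 2*(n:ℝ) - 1 := by
  rcases em (k % 4 = 3) with h3 | h3
  · rw [spin_x3 hp h3 r hr]
    intro hc
    have : ((2*r : ℤ) : ℝ) = ((2*(n:ℤ) - 1 : ℤ) : ℝ) := by push_cast; linarith
    have := Int.cast_injective this; omega
  · rw [spin_x1 hp h3 r hr]
    intro hc
    have : ((4*(n:ℤ) - 2 - 2*r : ℤ) : ℝ) = ((2*(n:ℤ) - 1 : ℤ) : ℝ) := by push_cast; linarith
    have := Int.cast_injective this; omega

lemma spin_inj (hp : p ∈ pathsBspin n ε k) {r r' : ℕ} (hr : r < n + 1) (hr' : r' < n + 1)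
    (heq : (pt p r).1 = (pt p r').1) (hne : (pt p r).1 ≠ 2*(n:ℝ) - 1) : r = r' := by
  have h1 : r ≠ n := by rintro rfl; exact hne (spin_xn hp)
  have h2 : r' ≠ n := by rintro rfl; exact hne (heq.trans (spin_xn hp))
  rcases em (k % 4 = 3) with h3 | h3
  · rw [spin_x3 hp h3 r (by omega), spin_x3 hp h3 r' (by omega)] at heq
    have : (r:ℝ) = (r':ℝ) := by linarith
    exact_mod_cast this
  · rw [spin_x1 hp h3 r (by omega), spin_x1 hp h3 r' (by omega)] at heq
    have : (r:ℝ) = (r':ℝ) := by linarith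
    exact_mod_cast this

lemma spin_val_at (hp : p ∈ pathsBspin n ε k) {v : ℝ}
    (hv : ((2*(n:ℝ) - 1, v) : ℝ × ℝ) ∈ p) : v = (pt p n).2 := by
  obtain ⟨r, hr, hptr⟩ := mem_pt hv
  rw [spin_len hp] at hr
  have hx : (pt p r).1 = 2*(n:ℝ) - 1 := by rw [hptr]
  have hrn : r = n := by
    by_contra hc
    exact spin_x_ne hp (by omega) hx
  subst hrn
  rw [hptr]

end TypeBSpinPath

/-! ### Type B : corners -/

section TypeBCorner
variable {n : ℕ} {ε : ℝ} {p q : List (ℝ × ℝ)} {lc : ℤ}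

lemma iota_eval (hn : 2 ≤ n) {j : ℕ} (hj1 : 1 ≤ j) (hj2 : j ≤ n - 1)
    {v m : ℤ} (hlodd : lc % 2 = 1) (hv : v = lc + 2*(n:ℤ) - 1 + 2*m)
    (hpar : m % 2 = (j:ℤ) % 2) :
    iotaB n (j, v) = (if lc % 4 = 3 then (2*(j:ℤ), v) else (4*(n:ℤ)-2-2*(j:ℤ), v)) := by
  unfold iotaB
  simp only
  rw [if_neg (by omega : ¬ j = n)]
  rcases em (lc % 4 = 3) with h | h
  · rw [if_pos h, if_pos (by omega)]
  · rw [if_neg h, if_neg (by omega)]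

lemma spin_pt_iota (hn : 2 ≤ n) (hq : q ∈ pathsBspin n ε lc) (hlodd : lc % 2 = 1)
    {u : ℕ} (hu1 : 1 ≤ u) (hu2 : u ≤ n - 1) :
    ∃ v : ℤ, v % 2 = 0 ∧ (pt q u).2 = (v:ℝ) ∧
      pt q u = (((iotaB n (u, v)).1 : ℝ), ((iotaB n (u, v)).2 : ℝ)) ∧
      (iotaB n (u, v) = (2*(u:ℤ), v) ∨ iotaB n (u, v) = (4*(n:ℤ)-2-2*(u:ℤ), v)) := by
  obtain ⟨m, hm, hpar, _, _⟩ := Mspin hq u hu2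
  refine ⟨lc + 2*(n:ℤ) - 1 + 2*m, by omega, hm, ?_, ?_⟩
  · rw [iota_eval hn hu1 hu2 hlodd rfl hpar]
    rcases em (lc % 4 = 3) with h | h
    · rw [if_pos h]
      refine Prod.ext ?_ hm
      rw [spin_x3 hq h u (by omega)]; push_cast; ring
    · rw [if_neg h]
      refine Prod.ext ?_ hm
      rw [spin_x1 hq h u (by omega)]; push_cast; ring
  · rw [iota_eval hn hu1 hu2 hlodd rfl hpar]
    rcases em (lc % 4 = 3) with h | h
    · left; rw [if_pos h]
    · right; rw [if_neg h]

lemma corner_mk (hn : 2 ≤ n) {j : ℕ} {v : ℤ} {up : Bool}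
    (hj1 : 1 ≤ j) (hj2 : j ≤ n-1) (hveven : v % 2 = 0)
    {r : ℕ} (hr1 : 1 ≤ r) (hr2 : r + 1 < p.length)
    (hpt : pt p r = (((iotaB n (j, v)).1 : ℝ), ((iotaB n (j, v)).2 : ℝ)))
    (hbr : iotaB n (j,v) = (2*(j:ℤ), v) ∨ iotaB n (j,v) = (4*(n:ℤ)-2-2*(j:ℤ), v))
    (hloc : if up then (pt p r).2 < (pt p (r - 1)).2 ∧ (pt p r).2 < (pt p (r + 1)).2
           else (pt p (r - 1)).2 < (pt p r).2 ∧ (pt p (r + 1)).2 < (pt p r).2) :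
    (j, v) ∈ Cp (.B n ε) p up := by
  refine memCpB.mpr ⟨Or.inr ⟨hj1, by omega, hveven⟩, Or.inl ⟨r, hr1, hr2, hpt, ?_, ?_, ?_, hloc⟩⟩
  · rcases hbr with h | h <;> rw [h] <;> simp only <;> omega
  · rcases hbr with h | h <;> rw [h] <;> simp only <;> omega
  · rcases hbr with h | h <;> rw [h] <;> simp only <;> omega

/-- The site `(n, c)` has `iotaB` first coordinate `2n-1`, so no `r`-clause corner there. -/
lemma corner_n_clause {x : ℕ × ℤ} {up : Bool} (hx : x.1 = n)
    (h : x ∈ Cp (.B n ε) p up) :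
    x.2 % 2 = 1 ∧
    (if up then (2 * (n : ℝ) - 1, (x.2 : ℝ) - ε) ∈ p ∧ (2 * (n : ℝ) - 1, (x.2 : ℝ) + ε) ∉ p
     else (2 * (n : ℝ) - 1, (x.2 : ℝ) + ε) ∈ p ∧ (2 * (n : ℝ) - 1, (x.2 : ℝ) - ε) ∉ p) := by
  rcases memCpB.mp h with ⟨hXB, hcl | hcl⟩
  · exfalso
    obtain ⟨r, _, _, _, _, h2, _, _⟩ := hcl
    apply h2
    unfold iotaB
    rw [if_pos hx]
  · refine ⟨?_, hcl.2⟩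
    rcases hXB with ⟨_, hodd⟩ | ⟨_, hlt, _⟩
    · exact hodd
    · omega

lemma corner_r_clause {x : ℕ × ℤ} {up : Bool} (hxlt : x.1 ≠ n)
    (h : x ∈ Cp (.B n ε) p up) :
    ∃ r : ℕ, 1 ≤ r ∧ r + 1 < p.length ∧
      pt p r = (((iotaB n x).1 : ℝ), ((iotaB n x).2 : ℝ)) ∧
      (iotaB n x).1 ≠ 2 * (n : ℤ) - 1 ∧
      (if up then (pt p r).2 < (pt p (r - 1)).2 ∧ (pt p r).2 < (pt p (r + 1)).2
       else (pt p (r - 1)).2 < (pt p r).2 ∧ (pt p (r + 1)).2 < (pt p r).2) := by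
  rcases memCpB.mp h with ⟨hXB, hcl | hcl⟩
  · obtain ⟨r, h1, h2, h3, _, h5, _, h7⟩ := hcl
    exact ⟨r, h1, h2, h3, h5, h7⟩
  · exact absurd hcl.1 hxlt

end TypeBCorner

section TypeBNoMax
variable {n : ℕ} {ε : ℝ} {i : ℕ} {k : ℤ} {p a b : List (ℝ × ℝ)}
variable (hn : 2 ≤ n)

include hn in
lemma noMaxQ_spin (hp : p ∈ pathsBspin n ε k) (hkodd : k % 2 = 1)
    (H : ∀ x : ℕ × ℤ, x.1 < n → x ∉ Cp (.B n ε) p false) : NoMaxQ n p := by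
  intro u h1 h2 hcon
  obtain ⟨v, hve, _, hpt, hbr⟩ := spin_pt_iota hn hp hkodd h1 h2
  refine H (u, v) (by simp; omega) (corner_mk hn h1 h2 hve h1 ?_ hpt hbr ?_)
  · rw [spin_len hp]; omega
  · simpa using hcon

include hn in
lemma noMinQ_spin (hp : p ∈ pathsBspin n ε k) (hkodd : k % 2 = 1)
    (H : ∀ x : ℕ × ℤ, x.1 < n → x ∉ Cp (.B n ε) p true) : NoMinQ n p := by
  intro u h1 h2 hcon
  obtain ⟨v, hve, _, hpt, hbr⟩ := spin_pt_iota hn hp hkodd h1 h2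
  refine H (u, v) (by simp; omega) (corner_mk hn h1 h2 hve h1 ?_ hpt hbr ?_)
  · rw [spin_len hp]; omega
  · simpa using hcon

variable (ha : a ∈ pathsBspin n ε (k - (2*(n:ℤ) - 2*(i:ℤ) - 1)))
  (hb : b ∈ pathsBspin n ε (k + (2*(n:ℤ) - 2*(i:ℤ) - 1)))
  (hab : p = a ++ b.reverse) (hi : i < n) (hk : k % 2 = 0)

include ha hb hab hn hi hk in
lemma noMaxQ_a (H : ∀ x : ℕ × ℤ, x.1 < n → x ∉ Cp (.B n ε) p false) : NoMaxQ n a := by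
  intro u h1 h2 hcon
  obtain ⟨v, hve, _, hpt, hbr⟩ := spin_pt_iota hn ha (by omega) h1 h2
  refine H (u, v) (by simp; omega) (corner_mk hn h1 h2 hve h1 ?_ ?_ hbr ?_)
  · rw [comb_len ha hb hab]; omega
  · rw [comb_pt_a ha hb hab u (by omega)]; exact hpt
  · simp only [Bool.false_eq_true, if_false]
    rw [comb_pt_a ha hb hab u (by omega), comb_pt_a ha hb hab (u-1) (by omega),
      comb_pt_a ha hb hab (u+1) (by omega)]
    exact hcon

include ha hb hab hn hi hk in
lemma noMinQ_a (H : ∀ x : ℕ × ℤ, x.1 < n → x ∉ Cp (.B n ε) p true) : NoMinQ n a := by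
  intro u h1 h2 hcon
  obtain ⟨v, hve, _, hpt, hbr⟩ := spin_pt_iota hn ha (by omega) h1 h2
  refine H (u, v) (by simp; omega) (corner_mk hn h1 h2 hve h1 ?_ ?_ hbr ?_)
  · rw [comb_len ha hb hab]; omega
  · rw [comb_pt_a ha hb hab u (by omega)]; exact hpt
  · simp only [if_true]
    rw [comb_pt_a ha hb hab u (by omega), comb_pt_a ha hb hab (u-1) (by omega),
      comb_pt_a ha hb hab (u+1) (by omega)]
    exact hcon

include ha hb hab hn hi hk in
lemma noMaxQ_b (H : ∀ x : ℕ × ℤ, x.1 < n → x ∉ Cp (.B n ε) p false) : NoMaxQ n b := by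
  intro u h1 h2 hcon
  obtain ⟨v, hve, _, hpt, hbr⟩ := spin_pt_iota hn hb (by omega) h1 h2
  refine H (u, v) (by simp; omega)
    (corner_mk (r := 2*n+1-u) hn h1 h2 hve (by omega) ?_ ?_ hbr ?_)
  · rw [comb_len ha hb hab]; omega
  · rw [comb_pt_b' ha hb hab (2*n+1-u) (by omega) (by omega),
      show 2*n+1-(2*n+1-u) = u from by omega]
    exact hpt
  · simp only [Bool.false_eq_true, if_false]
    rw [show 2*n+1-u-1 = 2*n+1-(u+1) from by omega, show 2*n+1-u+1 = 2*n+1-(u-1) from by omega]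
    rw [comb_pt_b ha hb hab u (by omega), comb_pt_b ha hb hab (u+1) (by omega),
      comb_pt_b ha hb hab (u-1) (by omega)]
    exact ⟨hcon.2, hcon.1⟩

include ha hb hab hn hi hk in
lemma noMinQ_b (H : ∀ x : ℕ × ℤ, x.1 < n → x ∉ Cp (.B n ε) p true) : NoMinQ n b := by
  intro u h1 h2 hcon
  obtain ⟨v, hve, _, hpt, hbr⟩ := spin_pt_iota hn hb (by omega) h1 h2
  refine H (u, v) (by simp; omega)
    (corner_mk (r := 2*n+1-u) hn h1 h2 hve (by omega) ?_ ?_ hbr ?_)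
  · rw [comb_len ha hb hab]; omega
  · rw [comb_pt_b' ha hb hab (2*n+1-u) (by omega) (by omega),
      show 2*n+1-(2*n+1-u) = u from by omega]
    exact hpt
  · simp only [if_true]
    rw [show 2*n+1-u-1 = 2*n+1-(u+1) from by omega, show 2*n+1-u+1 = 2*n+1-(u-1) from by omega]
    rw [comb_pt_b ha hb hab u (by omega), comb_pt_b ha hb hab (u+1) (by omega),
      comb_pt_b ha hb hab (u-1) (by omega)]
    exact ⟨hcon.2, hcon.1⟩

end TypeBNoMax

/-! ### Type B : N-corners and classification -/

section TypeBClassify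
variable {n : ℕ} {ε : ℝ} {i : ℕ} {k : ℤ} {p q a b : List (ℝ × ℝ)}
variable (hn : 2 ≤ n) (hε : 0 < ε ∧ ε < 1/2)

include hε in
lemma eps_ne_cross {c c' : ℤ} (h : (c:ℝ) + ε = (c':ℝ) - ε) : False := by
  have h1 : ((c' - c : ℤ):ℝ) = 2*ε := by push_cast; linarith
  have h2 : (0:ℝ) < ((c' - c : ℤ):ℝ) := by rw [h1]; linarith [hε.1]
  have h3 : ((c' - c : ℤ):ℝ) < 1 := by rw [h1]; linarith [hε.2]
  have h2' : (0:ℤ) < c' - c := by exact_mod_cast h2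
  have h3' : (c' - c : ℤ) < 1 := by exact_mod_cast h3
  omega

include hε in
lemma eps_inj_plus {c c' : ℤ} (h : (c:ℝ) + ε = (c':ℝ) + ε) : c = c' := by
  have : (c:ℝ) = (c':ℝ) := by linarith
  exact_mod_cast this

include hε in
lemma eps_inj_minus {c c' : ℤ} (h : (c:ℝ) - ε = (c':ℝ) - ε) : c = c' := by
  have : (c:ℝ) = (c':ℝ) := by linarith
  exact_mod_cast this

lemma cornerN_mk_minus {c : ℤ} (hodd : c % 2 = 1)
    (hmem : ((2*(n:ℝ)-1, (c:ℝ)+ε) : ℝ × ℝ) ∈ p)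
    (hnot : ((2*(n:ℝ)-1, (c:ℝ)-ε) : ℝ × ℝ) ∉ p) :
    ((n, c) : ℕ × ℤ) ∈ Cp (.B n ε) p false := by
  refine memCpB.mpr ⟨Or.inl ⟨rfl, hodd⟩, Or.inr ⟨rfl, ?_⟩⟩
  simp only [Bool.false_eq_true, if_false]
  exact ⟨hmem, hnot⟩

lemma cornerN_mk_plus {c : ℤ} (hodd : c % 2 = 1)
    (hmem : ((2*(n:ℝ)-1, (c:ℝ)-ε) : ℝ × ℝ) ∈ p)
    (hnot : ((2*(n:ℝ)-1, (c:ℝ)+ε) : ℝ × ℝ) ∉ p) :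
    ((n, c) : ℕ × ℤ) ∈ Cp (.B n ε) p true := by
  refine memCpB.mpr ⟨Or.inl ⟨rfl, hodd⟩, Or.inr ⟨rfl, ?_⟩⟩
  simp only [if_true]
  exact ⟨hmem, hnot⟩

lemma cornerN_elim_minus {c : ℤ} (h : ((n, c) : ℕ × ℤ) ∈ Cp (.B n ε) p false) :
    c % 2 = 1 ∧ ((2*(n:ℝ)-1, (c:ℝ)+ε) : ℝ × ℝ) ∈ p ∧
      ((2*(n:ℝ)-1, (c:ℝ)-ε) : ℝ × ℝ) ∉ p := by
  have := corner_n_clause rfl h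
  simp only [Bool.false_eq_true, if_false] at this
  exact ⟨this.1, this.2.1, this.2.2⟩

lemma cornerN_elim_plus {c : ℤ} (h : ((n, c) : ℕ × ℤ) ∈ Cp (.B n ε) p true) :
    c % 2 = 1 ∧ ((2*(n:ℝ)-1, (c:ℝ)-ε) : ℝ × ℝ) ∈ p ∧
      ((2*(n:ℝ)-1, (c:ℝ)+ε) : ℝ × ℝ) ∉ p := by
  have := corner_n_clause rfl h
  simp only [if_true] at this
  exact ⟨this.1, this.2.1, this.2.2⟩

include hn hε in
lemma spin_end_bounds {lc : ℤ} (hq : q ∈ pathsBspin n ε lc) :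
    (lc:ℝ) - ε ≤ (pt q n).2 ∧ (pt q n).2 ≤ (lc:ℝ) + 4*(n:ℝ) - 2 + ε := by
  obtain ⟨m, hm, _, hlb, hub⟩ := Mspin hq (n-1) le_rfl
  have hnr : ((n-1:ℕ):ℝ) = (n:ℝ) - 1 := by
    push_cast [Nat.cast_sub (by omega : 1 ≤ n)]; ring
  have hlbR : -((n:ℝ)-1) ≤ (m:ℝ) := by rw [← hnr]; exact_mod_cast hlb
  have hubR : (m:ℝ) ≤ (n:ℝ)-1 := by rw [← hnr]; exact_mod_cast hub
  have hmv : (pt q (n-1)).2 = (lc:ℝ) + 2*(n:ℝ) - 1 + 2*(m:ℝ) := by rw [hm]; push_cast; ring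
  have hmb : ((lc:ℝ) + 2*(n:ℝ) - 1 - 2*((n:ℝ)-1)) ≤ (pt q (n-1)).2 ∧
      (pt q (n-1)).2 ≤ (lc:ℝ) + 2*(n:ℝ) - 1 + 2*((n:ℝ)-1) := by
    rw [hmv]; constructor <;> nlinarith [hlbR, hubR]
  rcases spin_last hq with h | h <;> constructor <;> push_cast at hmb ⊢ <;>
    [linarith [hmb.1, hε.1]; linarith [hmb.2]; linarith [hmb.1]; linarith [hmb.2, hε.1]]

include hn hε in
/-- Classification of a spin path with no local max. -/
lemma classify_spin_minus (hp : p ∈ pathsBspin n ε k) (hkodd : k % 2 = 1)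
    (hnm : NoMaxQ n p) :
    ((∀ r, r ≤ n-1 → (pt p r).2 = (k:ℝ) + 2*(n:ℝ) - 1 - 2*(r:ℝ)) ∧ (pt p n).2 = (k:ℝ) - ε)
    ∨ (∃ c : ℤ, c % 2 = 1 ∧ k + 2 ≤ c ∧ (pt p n).2 = (c:ℝ) + ε ∧
        ((n, c) : ℕ × ℤ) ∈ Cp (.B n ε) p false) := by
  rcases spin_last hp with h | h
  · right
    obtain ⟨c, hodd, hv, hge, _, _⟩ := spin_end_up hn hp hkodd h
    refine ⟨c, hodd, hge, hv, cornerN_mk_minus hodd ?_ ?_⟩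
    · rw [show ((2*(n:ℝ)-1, (c:ℝ)+ε) : ℝ × ℝ) = pt p n from (Prod.ext (spin_xn hp) hv).symm]
      exact pt_mem (by rw [spin_len hp]; omega)
    · intro hmem
      have := spin_val_at hp hmem
      rw [hv] at this
      exact eps_ne_cross hε this.symm
  · exact Or.inl (spin_all_down hn hε hp hnm h)

include hn hε in
/-- Classification of a spin path with no local min. -/
lemma classify_spin_plus (hp : p ∈ pathsBspin n ε k) (hkodd : k % 2 = 1)
    (hnm : NoMinQ n p) :
    ((∀ r, r ≤ n-1 → (pt p r).2 = (k:ℝ) + 2*(n:ℝ) - 1 + 2*(r:ℝ)) ∧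
        (pt p n).2 = (k:ℝ) + 4*(n:ℝ) - 2 + ε)
    ∨ (∃ c : ℤ, c % 2 = 1 ∧ c ≤ k + 4*n - 4 ∧ (pt p n).2 = (c:ℝ) - ε ∧
        ((n, c) : ℕ × ℤ) ∈ Cp (.B n ε) p true) := by
  rcases spin_last hp with h | h
  · exact Or.inl (spin_all_up hn hε hp hnm h)
  · right
    obtain ⟨c, hodd, hv, _, hle, _⟩ := spin_end_down hn hp hkodd h
    refine ⟨c, hodd, hle, hv, cornerN_mk_plus hodd ?_ ?_⟩
    · rw [show ((2*(n:ℝ)-1, (c:ℝ)-ε) : ℝ × ℝ) = pt p n from (Prod.ext (spin_xn hp) hv).symm]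
      exact pt_mem (by rw [spin_len hp]; omega)
    · intro hmem
      have := spin_val_at hp hmem
      rw [hv] at this
      exact eps_ne_cross hε this

variable (hi : i < n) (hk : k % 2 = 0)
  (ha : a ∈ pathsBspin n ε (k - (2*(n:ℤ) - 2*(i:ℤ) - 1)))
  (hb : b ∈ pathsBspin n ε (k + (2*(n:ℤ) - 2*(i:ℤ) - 1)))
  (hab : p = a ++ b.reverse) (hvab : 0 < (pt a n).2 - (pt b n).2)

include hn hε hi hk ha hb hab hvab in
/-- Classification of a combined path with no local max in its components. -/
lemma classify_comb_minus (hnma : NoMaxQ n a) (hnmb : NoMaxQ n b) :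
    ((pt b n).2 = ((k + (2*(n:ℤ) - 2*(i:ℤ) - 1) : ℤ):ℝ) - ε ∧
      (pt a n).2 = ((k + (2*(n:ℤ) - 2*(i:ℤ) - 1) : ℤ):ℝ) + ε ∧
      (pt a (n-1)).2 = ((k + (2*(n:ℤ) - 2*(i:ℤ) - 1) - 1 : ℤ):ℝ) ∧
      (∀ r, r ≤ n-1 → (pt b r).2 =
        ((k + (2*(n:ℤ) - 2*(i:ℤ) - 1) : ℤ):ℝ) + 2*(n:ℝ) - 1 - 2*(r:ℝ)))
    ∨ (∃ c : ℤ, c % 2 = 1 ∧ k + (2*(n:ℤ) - 2*(i:ℤ) - 1) + 2 ≤ c ∧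
        ((n, c) : ℕ × ℤ) ∈ Cp (.B n ε) p false) := by
  have hlb : (k + (2*(n:ℤ) - 2*(i:ℤ) - 1)) % 2 = 1 := by omega
  have hla : (k - (2*(n:ℤ) - 2*(i:ℤ) - 1)) % 2 = 1 := by omega
  have hpn : pt p n = ((2*(n:ℝ)-1, (pt a n).2) : ℝ × ℝ) := by
    rw [(comb_vals ha hb hab).1]; exact Prod.ext (spin_xn ha) rfl
  have hpn1 : pt p (n+1) = ((2*(n:ℝ)-1, (pt b n).2) : ℝ × ℝ) := by
    rw [(comb_vals ha hb hab).2]; exact Prod.ext (spin_xn hb) rfl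
  have hmem_n : ((2*(n:ℝ)-1, (pt a n).2) : ℝ × ℝ) ∈ p := by
    rw [← hpn]; exact pt_mem (by rw [comb_len ha hb hab]; omega)
  have hmem_n1 : ((2*(n:ℝ)-1, (pt b n).2) : ℝ × ℝ) ∈ p := by
    rw [← hpn1]; exact pt_mem (by rw [comb_len ha hb hab]; omega)
  rcases spin_last hb with hbl | hbl
  · -- b ends up : corner from b
    right
    obtain ⟨c, hodd, hv, hge, _, _⟩ := spin_end_up hn hb hlb hbl
    refine ⟨c, hodd, hge, cornerN_mk_minus hodd (by rw [← hv]; exact hmem_n1) ?_⟩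
    intro hmem
    rcases comb_val_at ha hb hab hn hi hk hmem with hca | hcb
    · rw [← hca, hv] at hvab; linarith [hε.1]
    · rw [hv] at hcb; linarith [hε.1]
  · -- b all-down
    obtain ⟨hbsh, hbv⟩ := spin_all_down hn hε hb hnmb hbl
    rcases spin_last ha with hal | hal
    · -- a ends up
      obtain ⟨c, hodd, hv, _, _, hy⟩ := spin_end_up hn ha hla hal
      have hcge : k + (2*(n:ℤ) - 2*(i:ℤ) - 1) ≤ c := by
        rw [hv, hbv] at hvab
        have hR : ((k + (2*(n:ℤ) - 2*(i:ℤ) - 1) - 1 : ℤ) : ℝ) < (c:ℝ) := by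
          push_cast at hvab ⊢; linarith [hε.1, hε.2]
        have hZ : k + (2*(n:ℤ) - 2*(i:ℤ) - 1) - 1 < c := by exact_mod_cast hR
        omega
      rcases eq_or_lt_of_le hcge with hceq | hclt
      · left
        refine ⟨hbv, ?_, ?_, hbsh⟩
        · rw [hv, ← hceq]
        · rw [hy, ← hceq]
      · right
        have hcge2 : k + (2*(n:ℤ) - 2*(i:ℤ) - 1) + 2 ≤ c := by omega
        refine ⟨c, hodd, hcge2, cornerN_mk_minus hodd (by rw [← hv]; exact hmem_n) ?_⟩
        intro hmem
        rcases comb_val_at ha hb hab hn hi hk hmem with hca | hcb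
        · rw [hv] at hca; exact eps_ne_cross hε hca.symm
        · rw [hbv] at hcb
          have := eps_inj_minus hε hcb.symm
          omega
    · -- a all-down : impossible
      exfalso
      obtain ⟨_, hav⟩ := spin_all_down hn hε ha hnma hal
      rw [hav, hbv] at hvab
      have : ((k - (2*(n:ℤ) - 2*(i:ℤ) - 1)) : ℝ) > ((k + (2*(n:ℤ) - 2*(i:ℤ) - 1)) : ℝ) := by
        push_cast at hvab ⊢; linarith
      have : (k - (2*(n:ℤ) - 2*(i:ℤ) - 1)) > (k + (2*(n:ℤ) - 2*(i:ℤ) - 1)) := by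
        exact_mod_cast this
      omega

end TypeBClassify

/-! ### Type B : mirror classification, snake gaps, cross corners -/

section TypeBMore
variable {n : ℕ} {ε : ℝ} {i : ℕ} {k : ℤ} {p q a b : List (ℝ × ℝ)}
variable (hn : 2 ≤ n) (hε : 0 < ε ∧ ε < 1/2)
  (hi : i < n) (hk : k % 2 = 0)
  (ha : a ∈ pathsBspin n ε (k - (2*(n:ℤ) - 2*(i:ℤ) - 1)))
  (hb : b ∈ pathsBspin n ε (k + (2*(n:ℤ) - 2*(i:ℤ) - 1)))
  (hab : p = a ++ b.reverse) (hvab : 0 < (pt a n).2 - (pt b n).2)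

include hn hε hi hk ha hb hab hvab in
/-- Classification of a combined path with no local min in its components. -/
lemma classify_comb_plus (hnma : NoMinQ n a) (hnmb : NoMinQ n b) :
    ((pt a n).2 = ((k - (2*(n:ℤ) - 2*(i:ℤ) - 1) + 4*(n:ℤ) - 2 : ℤ):ℝ) + ε ∧
      (pt b n).2 = ((k - (2*(n:ℤ) - 2*(i:ℤ) - 1) + 4*(n:ℤ) - 2 : ℤ):ℝ) - ε ∧
      (pt b (n-1)).2 = ((k - (2*(n:ℤ) - 2*(i:ℤ) - 1) + 4*(n:ℤ) - 1 : ℤ):ℝ) ∧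
      (∀ r, r ≤ n-1 → (pt a r).2 =
        ((k - (2*(n:ℤ) - 2*(i:ℤ) - 1) : ℤ):ℝ) + 2*(n:ℝ) - 1 + 2*(r:ℝ)))
    ∨ (∃ c : ℤ, c % 2 = 1 ∧ c ≤ k - (2*(n:ℤ) - 2*(i:ℤ) - 1) + 4*(n:ℤ) - 4 ∧
        ((n, c) : ℕ × ℤ) ∈ Cp (.B n ε) p true) := by
  have hlb : (k + (2*(n:ℤ) - 2*(i:ℤ) - 1)) % 2 = 1 := by omega
  have hla : (k - (2*(n:ℤ) - 2*(i:ℤ) - 1)) % 2 = 1 := by omega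
  have hpn : pt p n = ((2*(n:ℝ)-1, (pt a n).2) : ℝ × ℝ) := by
    rw [(comb_vals ha hb hab).1]; exact Prod.ext (spin_xn ha) rfl
  have hpn1 : pt p (n+1) = ((2*(n:ℝ)-1, (pt b n).2) : ℝ × ℝ) := by
    rw [(comb_vals ha hb hab).2]; exact Prod.ext (spin_xn hb) rfl
  have hmem_n : ((2*(n:ℝ)-1, (pt a n).2) : ℝ × ℝ) ∈ p := by
    rw [← hpn]; exact pt_mem (by rw [comb_len ha hb hab]; omega)
  have hmem_n1 : ((2*(n:ℝ)-1, (pt b n).2) : ℝ × ℝ) ∈ p := by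
    rw [← hpn1]; exact pt_mem (by rw [comb_len ha hb hab]; omega)
  rcases spin_last ha with hal | hal
  · -- a all-up
    obtain ⟨hash, hav⟩ := spin_all_up hn hε ha hnma hal
    have havZ : (pt a n).2 = ((k - (2*(n:ℤ) - 2*(i:ℤ) - 1) + 4*(n:ℤ) - 2 : ℤ):ℝ) + ε := by
      rw [hav]; push_cast; ring
    rcases spin_last hb with hbl | hbl
    · exfalso
      obtain ⟨_, hbv⟩ := spin_all_up hn hε hb hnmb hbl
      rw [hav, hbv] at hvab
      have h1 : ((k - (2*(n:ℤ) - 2*(i:ℤ) - 1)):ℝ) > ((k + (2*(n:ℤ) - 2*(i:ℤ) - 1)):ℝ) := by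
        push_cast at hvab ⊢; linarith
      have h2 : (k - (2*(n:ℤ) - 2*(i:ℤ) - 1)) > (k + (2*(n:ℤ) - 2*(i:ℤ) - 1)) := by
        exact_mod_cast h1
      omega
    · obtain ⟨c, hodd, hv, _, hle, hy⟩ := spin_end_down hn hb hlb hbl
      have hcle : c ≤ k - (2*(n:ℤ) - 2*(i:ℤ) - 1) + 4*(n:ℤ) - 2 := by
        rw [hv, havZ] at hvab
        have hR : (c:ℝ) < ((k - (2*(n:ℤ) - 2*(i:ℤ) - 1) + 4*(n:ℤ) - 2 + 1 : ℤ):ℝ) := by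
          push_cast at hvab ⊢; linarith [hε.1, hε.2]
        have hZ : c < k - (2*(n:ℤ) - 2*(i:ℤ) - 1) + 4*(n:ℤ) - 2 + 1 := by exact_mod_cast hR
        omega
      rcases eq_or_lt_of_le hcle with hceq | hclt
      · left
        refine ⟨havZ, by rw [hv, hceq], ?_, hash⟩
        rw [hy, hceq]
        push_cast; ring
      · right
        refine ⟨c, hodd, by omega, cornerN_mk_plus hodd (by rw [← hv]; exact hmem_n1) ?_⟩
        intro hmem
        rcases comb_val_at ha hb hab hn hi hk hmem with hca | hcb
        · rw [havZ] at hca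
          have := eps_inj_plus hε hca.symm
          omega
        · rw [hv] at hcb; linarith [hε.1]
  · -- a ends down : corner from a
    right
    obtain ⟨c, hodd, hv, _, hle, _⟩ := spin_end_down hn ha hla hal
    refine ⟨c, hodd, by omega, cornerN_mk_plus hodd (by rw [← hv]; exact hmem_n) ?_⟩
    intro hmem
    rcases comb_val_at ha hb hab hn hi hk hmem with hca | hcb
    · rw [hv] at hca; linarith [hε.1]
    · rw [hv] at hvab
      rw [← hcb] at hvab
      linarith [hε.1]

end TypeBMore

section Snake
variable {n : ℕ} {ε : ℝ} {T : ℕ} {w : Fin T → ℕ × ℤ}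

lemma snake_step (hw : IsSnake (.B n ε) w) {s : Fin T} (h : (s:ℕ) + 1 < T) :
    2*((w ⟨(s:ℕ)+1, h⟩).1:ℤ) - 2*((w s).1:ℤ) + 2 ≤ (w ⟨(s:ℕ)+1, h⟩).2 - (w s).2 ∧
    2*((w s).1:ℤ) - 2*((w ⟨(s:ℕ)+1, h⟩).1:ℤ) + 2 ≤ (w ⟨(s:ℕ)+1, h⟩).2 - (w s).2 := by
  have hsp := hw.2 s h
  set x := w s with hxd
  set y := w ⟨(s:ℕ)+1, h⟩ with hyd
  simp only [SnakePos] at hsp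
  split_ifs at hsp with h1 h2
  · obtain ⟨hx, hy⟩ := h1
    rw [hx, hy]
    omega
  · rcases abs_cases ((y.1:ℤ) - (x.1:ℤ)) with ⟨he, _⟩ | ⟨he, _⟩ <;> rw [he] at hsp <;> omega
  · rcases abs_cases ((y.1:ℤ) - (x.1:ℤ)) with ⟨he, _⟩ | ⟨he, _⟩ <;> rw [he] at hsp <;> omega

lemma snake_gap (hw : IsSnake (.B n ε) w) {s t : Fin T} (hst : s < t) :
    2*((w t).1:ℤ) - 2*((w s).1:ℤ) + 2 ≤ (w t).2 - (w s).2 ∧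
    2*((w s).1:ℤ) - 2*((w t).1:ℤ) + 2 ≤ (w t).2 - (w s).2 := by
  have key : ∀ m : ℕ, ∀ t : Fin T, (t:ℕ) = (s:ℕ) + 1 + m →
      2*((w t).1:ℤ) - 2*((w s).1:ℤ) + 2 ≤ (w t).2 - (w s).2 ∧
      2*((w s).1:ℤ) - 2*((w t).1:ℤ) + 2 ≤ (w t).2 - (w s).2 := by
    intro m
    induction m with
    | zero =>
      intro t ht
      have htT : (t:ℕ) < T := t.isLt
      have hlt : (s:ℕ) + 1 < T := by omega
      have : t = ⟨(s:ℕ)+1, hlt⟩ := Fin.ext (show (t:ℕ) = (s:ℕ)+1 from by omega)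
      subst this
      exact snake_step hw hlt
    | succ m ih =>
      intro t ht
      have htT : (t:ℕ) < T := t.isLt
      have hlt : (s:ℕ) + 1 + m < T := by omega
      set u : Fin T := ⟨(s:ℕ)+1+m, hlt⟩ with hu
      have h1 := ih u rfl
      have hlt2 : (u:ℕ) + 1 < T := by simp [hu]; omega
      have h2 := snake_step hw hlt2
      have : t = ⟨(u:ℕ)+1, hlt2⟩ := Fin.ext (show (t:ℕ) = (s:ℕ)+1+m+1 from by omega)
      subst this
      constructor <;> omega
  have hst' : (s:ℕ) < (t:ℕ) := hst
  exact key ((t:ℕ) - (s:ℕ) - 1) t (by omega)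

end Snake

/-! ### Type B : cross corners, partners, cancellation -/

section TypeBCross
variable {n : ℕ} {ε : ℝ} {p : List (ℝ × ℝ)}

lemma corner_r_minus {x : ℕ × ℤ} (hxlt : x.1 ≠ n) (h : x ∈ Cp (.B n ε) p false) :
    ∃ r : ℕ, 1 ≤ r ∧ r + 1 < p.length ∧
      pt p r = (((iotaB n x).1 : ℝ), ((iotaB n x).2 : ℝ)) ∧
      (iotaB n x).1 ≠ 2 * (n : ℤ) - 1 ∧
      (pt p (r - 1)).2 < (pt p r).2 ∧ (pt p (r + 1)).2 < (pt p r).2 := by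
  obtain ⟨r, h1, h2, h3, h4, h5⟩ := corner_r_clause hxlt h
  simp only [Bool.false_eq_true, if_false] at h5
  exact ⟨r, h1, h2, h3, h4, h5.1, h5.2⟩

lemma corner_r_plus {x : ℕ × ℤ} (hxlt : x.1 ≠ n) (h : x ∈ Cp (.B n ε) p true) :
    ∃ r : ℕ, 1 ≤ r ∧ r + 1 < p.length ∧
      pt p r = (((iotaB n x).1 : ℝ), ((iotaB n x).2 : ℝ)) ∧
      (iotaB n x).1 ≠ 2 * (n : ℤ) - 1 ∧
      (pt p r).2 < (pt p (r - 1)).2 ∧ (pt p r).2 < (pt p (r + 1)).2 := by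
  obtain ⟨r, h1, h2, h3, h4, h5⟩ := corner_r_clause hxlt h
  simp only [if_true] at h5
  exact ⟨r, h1, h2, h3, h4, h5.1, h5.2⟩

variable {T : ℕ} {w : Fin T → ℕ × ℤ} {ps : Fin T → List (ℝ × ℝ)}
variable (hn : 2 ≤ n) (hε : 0 < ε ∧ ε < 1/2)
  (hw : IsSnake (.B n ε) w) (hps : ps ∈ PBar (.B n ε) w)

include hn hw hps in
lemma B_same_inj {s : Fin T} {r r' : ℕ}
    (hr : r < (ps s).length) (hr' : r' < (ps s).length)
    (heq : (pt (ps s) r).1 = (pt (ps s) r').1) (hne : (pt (ps s) r).1 ≠ 2*(n:ℝ) - 1) :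
    r = r' := by
  have hX := hw.1 s
  rcases em ((w s).1 = n) with hsp | hco
  · have hp := spin_mem hsp (hps.1 s)
    rw [spin_len hp] at hr hr'
    exact spin_inj hp hr hr' heq hne
  · obtain ⟨h1i, hilt, hkev⟩ : 1 ≤ (w s).1 ∧ (w s).1 < n ∧ (w s).2 % 2 = 0 := by
      rcases hX with ⟨h, _⟩ | ⟨h1, h2, h3⟩
      · exact absurd h hco
      · exact ⟨h1, h2, h3⟩
    obtain ⟨a, b, ha, hb, hab, hvab⟩ := comb_decomp hco (hps.1 s)
    rw [comb_len ha hb hab] at hr hr'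
    exact comb_inj ha hb hab hn hilt hkev hr hr' heq hne

include hn hε hw hps in
lemma B_Hno_minus (hD : Dominant (tmon (.B n ε) ps)) :
    ∀ s, ∀ x : ℕ × ℤ, x.1 < n → x ∉ Cp (.B n ε) (ps s) false := by
  intro s x hxlt hx
  apply not_dom_of_corner hD hx
  intro s' hx'
  obtain ⟨r, hr1, hr2, hpt, hι, hL, hR⟩ := corner_r_minus (by omega) hx
  obtain ⟨r', hr1', hr2', hpt', hι', hL', hR'⟩ := corner_r_plus (by omega) hx'
  have hmem : pt (ps s) r ∈ ps s := pt_mem (by omega)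
  have hmem' : pt (ps s') r' ∈ ps s' := pt_mem (by omega)
  have hfst : (pt (ps s) r).1 = ((iotaB n x).1 : ℝ) := by rw [hpt]
  have hfst' : (pt (ps s') r').1 = ((iotaB n x).1 : ℝ) := by rw [hpt']
  rcases lt_trichotomy s' s with hlt | heqq | hgt
  · have := hps.2 s' s hlt _ hmem' _ hmem (by rw [hfst, hfst'])
    rw [hpt, hpt'] at this
    exact lt_irrefl _ this
  · subst heqq
    have hne : (pt (ps s') r).1 ≠ 2*(n:ℝ) - 1 := by
      rw [hfst]
      intro hc
      apply hι
      exact_mod_cast hc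
    have hrr : r = r' := B_same_inj hn hw hps (by omega) (by omega)
      (by rw [hfst, hfst']) hne
    subst hrr
    linarith
  · have := hps.2 s s' hgt _ hmem _ hmem' (by rw [hfst, hfst'])
    rw [hpt, hpt'] at this
    exact lt_irrefl _ this

include hn hε hw hps in
lemma B_Hno_plus (hD : AntiDominant (tmon (.B n ε) ps)) :
    ∀ s, ∀ x : ℕ × ℤ, x.1 < n → x ∉ Cp (.B n ε) (ps s) true := by
  intro s x hxlt hx
  apply not_antidom_of_corner hD hx
  intro s' hx'
  obtain ⟨r, hr1, hr2, hpt, hι, hL, hR⟩ := corner_r_plus (by omega) hx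
  obtain ⟨r', hr1', hr2', hpt', hι', hL', hR'⟩ := corner_r_minus (by omega) hx'
  have hmem : pt (ps s) r ∈ ps s := pt_mem (by omega)
  have hmem' : pt (ps s') r' ∈ ps s' := pt_mem (by omega)
  have hfst : (pt (ps s) r).1 = ((iotaB n x).1 : ℝ) := by rw [hpt]
  have hfst' : (pt (ps s') r').1 = ((iotaB n x).1 : ℝ) := by rw [hpt']
  rcases lt_trichotomy s' s with hlt | heqq | hgt
  · have := hps.2 s' s hlt _ hmem' _ hmem (by rw [hfst, hfst'])
    rw [hpt, hpt'] at this
    exact lt_irrefl _ this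
  · subst heqq
    have hne : (pt (ps s') r).1 ≠ 2*(n:ℝ) - 1 := by
      rw [hfst]
      intro hc
      apply hι
      exact_mod_cast hc
    have hrr : r = r' := B_same_inj hn hw hps (by omega) (by omega)
      (by rw [hfst, hfst']) hne
    subst hrr
    linarith
  · have := hps.2 s s' hgt _ hmem _ hmem' (by rw [hfst, hfst'])
    rw [hpt, hpt'] at this
    exact lt_irrefl _ this

include hn hε hw hps in
lemma partner_minus {s : Fin T} {c : ℤ}
    (Hno : ∀ x : ℕ × ℤ, x.1 < n → x ∉ Cp (.B n ε) (ps s) false)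
    (hcm : ((2*(n:ℝ)-1, (c:ℝ)-ε) : ℝ × ℝ) ∈ ps s) :
    c = (w s).2 + (if (w s).1 = n then 0 else 2*(n:ℤ) - 2*((w s).1:ℤ) - 1) := by
  have hX := hw.1 s
  rcases em ((w s).1 = n) with hsp | hco
  · rw [if_pos hsp]
    have hkodd : (w s).2 % 2 = 1 := by
      rcases hX with ⟨_, h⟩ | ⟨_, h, _⟩
      · exact h
      · omega
    have hp := spin_mem hsp (hps.1 s)
    have hval := spin_val_at hp hcm
    rcases spin_last hp with hup | hdn
    · obtain ⟨c', _, hv, _, _, _⟩ := spin_end_up hn hp hkodd hup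
      rw [hv] at hval
      exact absurd hval.symm (fun hh => eps_ne_cross hε hh)
    · have hnm := noMaxQ_spin hn hp hkodd Hno
      obtain ⟨_, hv⟩ := spin_all_down hn hε hp hnm hdn
      rw [hv] at hval
      have := eps_inj_minus hε hval
      omega
  · rw [if_neg hco]
    obtain ⟨h1i, hilt, hkev⟩ : 1 ≤ (w s).1 ∧ (w s).1 < n ∧ (w s).2 % 2 = 0 := by
      rcases hX with ⟨h, _⟩ | ⟨h1, h2, h3⟩
      · exact absurd h hco
      · exact ⟨h1, h2, h3⟩
    obtain ⟨a, b, ha, hb, hab, hvab⟩ := comb_decomp hco (hps.1 s)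
    have hval := comb_val_at ha hb hab hn hilt hkev hcm
    have hlbodd : ((w s).2 + (2*(n:ℤ) - 2*((w s).1:ℤ) - 1)) % 2 = 1 := by omega
    have hlaodd : ((w s).2 - (2*(n:ℤ) - 2*((w s).1:ℤ) - 1)) % 2 = 1 := by omega
    rcases hval with hva | hvb
    · exfalso
      rcases spin_last ha with hup | hdn
      · obtain ⟨c', _, hv, _, _, _⟩ := spin_end_up hn ha hlaodd hup
        rw [hv] at hva
        exact eps_ne_cross hε hva.symm
      · have hnm := noMaxQ_a hn ha hb hab hilt hkev Hno
        obtain ⟨_, hv⟩ := spin_all_down hn hε ha hnm hdn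
        have hbnd := (spin_end_bounds hn hε hb).1
        rw [hv] at hvab
        have hR : (((w s).2 + (2*(n:ℤ) - 2*((w s).1:ℤ) - 1) : ℤ):ℝ) <
            (((w s).2 - (2*(n:ℤ) - 2*((w s).1:ℤ) - 1) : ℤ):ℝ) := by
          push_cast at hbnd hvab ⊢
          linarith
        have hZ : ((w s).2 + (2*(n:ℤ) - 2*((w s).1:ℤ) - 1)) <
            ((w s).2 - (2*(n:ℤ) - 2*((w s).1:ℤ) - 1)) := by exact_mod_cast hR
        omega
    · rcases spin_last hb with hup | hdn
      · obtain ⟨c', _, hv, _, _, _⟩ := spin_end_up hn hb hlbodd hup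
        rw [hv] at hvb
        exact absurd hvb.symm (fun hh => eps_ne_cross hε hh)
      · have hnm := noMaxQ_b hn ha hb hab hilt hkev Hno
        obtain ⟨_, hv⟩ := spin_all_down hn hε hb hnm hdn
        rw [hv] at hvb
        exact eps_inj_minus hε hvb

include hn hε hw hps in
lemma partner_plus {s : Fin T} {c : ℤ}
    (Hno : ∀ x : ℕ × ℤ, x.1 < n → x ∉ Cp (.B n ε) (ps s) true)
    (hcm : ((2*(n:ℝ)-1, (c:ℝ)+ε) : ℝ × ℝ) ∈ ps s) :
    c = (w s).2 - (if (w s).1 = n then 0 else 2*(n:ℤ) - 2*((w s).1:ℤ) - 1)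
      + 4*(n:ℤ) - 2 := by
  have hX := hw.1 s
  rcases em ((w s).1 = n) with hsp | hco
  · rw [if_pos hsp]
    have hkodd : (w s).2 % 2 = 1 := by
      rcases hX with ⟨_, h⟩ | ⟨_, h, _⟩
      · exact h
      · omega
    have hp := spin_mem hsp (hps.1 s)
    have hval := spin_val_at hp hcm
    rcases spin_last hp with hup | hdn
    · have hnm := noMinQ_spin hn hp hkodd Hno
      obtain ⟨_, hv⟩ := spin_all_up hn hε hp hnm hup
      have hvZ : (pt (ps s) n).2 = (((w s).2 + 4*(n:ℤ) - 2 : ℤ):ℝ) + ε := by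
        rw [hv]; push_cast; ring
      rw [hvZ] at hval
      have := eps_inj_plus hε hval
      omega
    · obtain ⟨c', _, hv, _, _, _⟩ := spin_end_down hn hp hkodd hdn
      rw [hv] at hval
      exact (eps_ne_cross hε hval).elim
  · rw [if_neg hco]
    obtain ⟨h1i, hilt, hkev⟩ : 1 ≤ (w s).1 ∧ (w s).1 < n ∧ (w s).2 % 2 = 0 := by
      rcases hX with ⟨h, _⟩ | ⟨h1, h2, h3⟩
      · exact absurd h hco
      · exact ⟨h1, h2, h3⟩
    obtain ⟨a, b, ha, hb, hab, hvab⟩ := comb_decomp hco (hps.1 s)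
    have hval := comb_val_at ha hb hab hn hilt hkev hcm
    have hlbodd : ((w s).2 + (2*(n:ℤ) - 2*((w s).1:ℤ) - 1)) % 2 = 1 := by omega
    have hlaodd : ((w s).2 - (2*(n:ℤ) - 2*((w s).1:ℤ) - 1)) % 2 = 1 := by omega
    rcases hval with hva | hvb
    · rcases spin_last ha with hup | hdn
      · have hnm := noMinQ_a hn ha hb hab hilt hkev Hno
        obtain ⟨_, hv⟩ := spin_all_up hn hε ha hnm hup
        have hvZ : (pt a n).2 =
            (((w s).2 - (2*(n:ℤ)-2*((w s).1:ℤ)-1) + 4*(n:ℤ) - 2 : ℤ):ℝ) + ε := by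
          rw [hv]; push_cast; ring
        rw [hvZ] at hva
        exact eps_inj_plus hε hva
      · obtain ⟨c', _, hv, _, _, _⟩ := spin_end_down hn ha hlaodd hdn
        rw [hv] at hva
        exact (eps_ne_cross hε hva).elim
    · exfalso
      rcases spin_last hb with hup | hdn
      · have hnm := noMinQ_b hn ha hb hab hilt hkev Hno
        obtain ⟨_, hv⟩ := spin_all_up hn hε hb hnm hup
        have habnd := (spin_end_bounds hn hε ha).2
        rw [hv] at hvab
        have hR : (((w s).2 - (2*(n:ℤ)-2*((w s).1:ℤ)-1) : ℤ):ℝ) >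
            (((w s).2 + (2*(n:ℤ)-2*((w s).1:ℤ)-1) : ℤ):ℝ) := by
          push_cast at habnd hvab ⊢
          linarith
        have hZ : ((w s).2 - (2*(n:ℤ)-2*((w s).1:ℤ)-1)) >
            ((w s).2 + (2*(n:ℤ)-2*((w s).1:ℤ)-1)) := by exact_mod_cast hR
        omega
      · obtain ⟨c', _, hv, _, _, _⟩ := spin_end_down hn hb hlbodd hdn
        rw [hv] at hvb
        exact eps_ne_cross hε hvb

include hn hε hw hps in
lemma cancel_minus (hD : Dominant (tmon (.B n ε) ps)) {t : Fin T} {c : ℤ}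
    (Hno : ∀ s, ∀ x : ℕ × ℤ, x.1 < n → x ∉ Cp (.B n ε) (ps s) false)
    (hcor : ((n, c) : ℕ × ℤ) ∈ Cp (.B n ε) (ps t) false)
    (hnotplus : ((n, c) : ℕ × ℤ) ∉ Cp (.B n ε) (ps t) true)
    (hge : (w t).2 + (if (w t).1 = n then 0 else 2*(n:ℤ) - 2*((w t).1:ℤ) - 1) + 2 ≤ c) :
    False := by
  obtain ⟨s, hst, hplus⟩ := exists_plus_of_dom hD hcor hnotplus
  obtain ⟨_, hsmem, _⟩ := cornerN_elim_plus hplus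
  obtain ⟨_, htmem, _⟩ := cornerN_elim_minus hcor
  have hslt : s < t := by
    rcases lt_or_gt_of_ne hst with h | h
    · exact h
    · exfalso
      have := hps.2 t s h _ htmem _ hsmem rfl
      simp only at this
      linarith [hε.1]
  have hc_eq := partner_minus hn hε hw hps (Hno s) hsmem
  have hgap := snake_gap hw hslt
  have hs_range : (w s).1 = n ∨ (1 ≤ (w s).1 ∧ (w s).1 < n) := by
    rcases hw.1 s with ⟨h, _⟩ | ⟨h1, h2, _⟩
    · exact Or.inl h
    · exact Or.inr ⟨h1, h2⟩
  have ht_range : (w t).1 = n ∨ (1 ≤ (w t).1 ∧ (w t).1 < n) := by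
    rcases hw.1 t with ⟨h, _⟩ | ⟨h1, h2, _⟩
    · exact Or.inl h
    · exact Or.inr ⟨h1, h2⟩
  rcases em ((w s).1 = n) with h1 | h1 <;> rcases em ((w t).1 = n) with h2 | h2 <;>
    [rw [if_pos h1] at hc_eq; rw [if_pos h1] at hc_eq; rw [if_neg h1] at hc_eq;
     rw [if_neg h1] at hc_eq] <;>
    [rw [if_pos h2] at hge; rw [if_neg h2] at hge; rw [if_pos h2] at hge;
     rw [if_neg h2] at hge] <;>
    omega

include hn hε hw hps in
lemma cancel_plus (hD : AntiDominant (tmon (.B n ε) ps)) {t : Fin T} {c : ℤ}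
    (Hno : ∀ s, ∀ x : ℕ × ℤ, x.1 < n → x ∉ Cp (.B n ε) (ps s) true)
    (hcor : ((n, c) : ℕ × ℤ) ∈ Cp (.B n ε) (ps t) true)
    (hnotminus : ((n, c) : ℕ × ℤ) ∉ Cp (.B n ε) (ps t) false)
    (hle : c ≤ (w t).2 - (if (w t).1 = n then 0 else 2*(n:ℤ) - 2*((w t).1:ℤ) - 1)
      + 4*(n:ℤ) - 4) :
    False := by
  obtain ⟨s, hst, hminus⟩ := exists_minus_of_antidom hD hcor hnotminus
  obtain ⟨_, hsmem, _⟩ := cornerN_elim_minus hminus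
  obtain ⟨_, htmem, _⟩ := cornerN_elim_plus hcor
  have hslt : t < s := by
    rcases lt_or_gt_of_ne hst with h | h
    · exfalso
      have := hps.2 s t h _ hsmem _ htmem rfl
      simp only at this
      linarith [hε.1]
    · exact h
  have hc_eq := partner_plus hn hε hw hps (Hno s) hsmem
  have hgap := snake_gap hw hslt
  have hs_range : (w s).1 = n ∨ (1 ≤ (w s).1 ∧ (w s).1 < n) := by
    rcases hw.1 s with ⟨h, _⟩ | ⟨h1, h2, _⟩
    · exact Or.inl h
    · exact Or.inr ⟨h1, h2⟩
  have ht_range : (w t).1 = n ∨ (1 ≤ (w t).1 ∧ (w t).1 < n) := by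
    rcases hw.1 t with ⟨h, _⟩ | ⟨h1, h2, _⟩
    · exact Or.inl h
    · exact Or.inr ⟨h1, h2⟩
  rcases em ((w s).1 = n) with h1 | h1 <;> rcases em ((w t).1 = n) with h2 | h2 <;>
    [rw [if_pos h1] at hc_eq; rw [if_pos h1] at hc_eq; rw [if_neg h1] at hc_eq;
     rw [if_neg h1] at hc_eq] <;>
    [rw [if_pos h2] at hle; rw [if_neg h2] at hle; rw [if_pos h2] at hle;
     rw [if_neg h2] at hle] <;>
    omega

end TypeBCross

/-! ### Type B : emptiness of corner sets, uniqueness, main lemma -/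

section MainB
variable {n : ℕ} {ε : ℝ} {T : ℕ} {w : Fin T → ℕ × ℤ} {ps : Fin T → List (ℝ × ℝ)}
variable (hn : 2 ≤ n) (hε : 0 < ε ∧ ε < 1/2)

lemma list_pt_ext {p q : List (ℝ × ℝ)} (hl : p.length = q.length)
    (h : ∀ r, r < p.length → pt p r = pt q r) : p = q :=
  List.ext_getElem hl (fun r h1 h2 => by
    rw [← pt_eq_getElem h1, ← pt_eq_getElem h2]; exact h r h1)

include hn hε in
lemma B_empty_minus (hw : IsSnake (.B n ε) w) (hps : ps ∈ PBar (.B n ε) w)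
    (hD : Dominant (tmon (.B n ε) ps)) (t : Fin T) :
    ∀ x, x ∉ Cp (.B n ε) (ps t) false := by
  have Hno := B_Hno_minus hn hε hw hps hD
  have hX := hw.1 t
  rcases em ((w t).1 = n) with hsp | hco
  · have hkodd : (w t).2 % 2 = 1 := by
      rcases hX with ⟨_, h⟩ | ⟨_, h, _⟩
      · exact h
      · omega
    have hp := spin_mem hsp (hps.1 t)
    have hnm := noMaxQ_spin hn hp hkodd (Hno t)
    rcases classify_spin_minus hn hε hp hkodd hnm with ⟨hsh, hv⟩ | ⟨c, hodd, hge, hv, hcor⟩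
    · intro x hx
      have hXB := (memCpB.mp hx).1
      rcases em (x.1 = n) with hxn | hxn
      · obtain ⟨x1, x2⟩ := x
        simp only at hxn
        rw [hxn] at hx
        obtain ⟨_, hmem, _⟩ := cornerN_elim_minus hx
        have hvv := spin_val_at hp hmem
        rw [hv] at hvv
        exact eps_ne_cross hε hvv
      · have hxlt : x.1 < n := by
          rcases hXB with ⟨h, _⟩ | ⟨_, h, _⟩
          · exact absurd h hxn
          · omega
        exact Hno t x hxlt hx
    · exfalso
      have hnotplus : ((n, c) : ℕ × ℤ) ∉ Cp (.B n ε) (ps t) true := by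
        intro hc'
        obtain ⟨_, hmem, _⟩ := cornerN_elim_plus hc'
        have hvv := spin_val_at hp hmem
        rw [hv] at hvv
        linarith [hε.1]
      refine cancel_minus hn hε hw hps hD Hno hcor hnotplus ?_
      rw [if_pos hsp]
      omega
  · obtain ⟨h1i, hilt, hkev⟩ : 1 ≤ (w t).1 ∧ (w t).1 < n ∧ (w t).2 % 2 = 0 := by
      rcases hX with ⟨h, _⟩ | ⟨h1, h2, h3⟩
      · exact absurd h hco
      · exact ⟨h1, h2, h3⟩
    obtain ⟨a, b, ha, hb, hab, hvab⟩ := comb_decomp hco (hps.1 t)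
    have hnma := noMaxQ_a hn ha hb hab hilt hkev (Hno t)
    have hnmb := noMaxQ_b hn ha hb hab hilt hkev (Hno t)
    rcases classify_comb_minus hn hε hilt hkev ha hb hab hvab hnma hnmb with
      ⟨hvb, hva, hapin, hbsh⟩ | ⟨c, hodd, hge, hcor⟩
    · intro x hx
      have hXB := (memCpB.mp hx).1
      rcases em (x.1 = n) with hxn | hxn
      · obtain ⟨x1, x2⟩ := x
        simp only at hxn
        rw [hxn] at hx
        obtain ⟨_, hmem, hnot⟩ := cornerN_elim_minus hx
        have hpn1 : pt (ps t) (n+1) = ((2*(n:ℝ)-1, (pt b n).2) : ℝ × ℝ) := by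
          rw [(comb_vals ha hb hab).2]; exact Prod.ext (spin_xn hb) rfl
        have hmem_n1 : ((2*(n:ℝ)-1, (pt b n).2) : ℝ × ℝ) ∈ ps t := by
          rw [← hpn1]; exact pt_mem (by rw [comb_len ha hb hab]; omega)
        rcases comb_val_at ha hb hab hn hilt hkev hmem with hv1 | hv1
        · rw [hva] at hv1
          have hx2 : x2 = (w t).2 + (2*(n:ℤ) - 2*((w t).1:ℤ) - 1) := eps_inj_plus hε hv1
          apply hnot
          rw [hx2]
          rw [← hvb]
          exact hmem_n1
        · rw [hvb] at hv1
          exact eps_ne_cross hε hv1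
      · have hxlt : x.1 < n := by
          rcases hXB with ⟨h, _⟩ | ⟨_, h, _⟩
          · exact absurd h hxn
          · omega
        exact Hno t x hxlt hx
    · exfalso
      have hnotplus : ((n, c) : ℕ × ℤ) ∉ Cp (.B n ε) (ps t) true := by
        intro hc'
        obtain ⟨_, hmem, hnot2⟩ := cornerN_elim_plus hc'
        obtain ⟨_, hmem2, _⟩ := cornerN_elim_minus hcor
        exact hnot2 hmem2
      refine cancel_minus hn hε hw hps hD Hno hcor hnotplus ?_
      rw [if_neg hco]
      omega

include hn hε in
lemma B_empty_plus (hw : IsSnake (.B n ε) w) (hps : ps ∈ PBar (.B n ε) w)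
    (hD : AntiDominant (tmon (.B n ε) ps)) (t : Fin T) :
    ∀ x, x ∉ Cp (.B n ε) (ps t) true := by
  have Hno := B_Hno_plus hn hε hw hps hD
  have hX := hw.1 t
  rcases em ((w t).1 = n) with hsp | hco
  · have hkodd : (w t).2 % 2 = 1 := by
      rcases hX with ⟨_, h⟩ | ⟨_, h, _⟩
      · exact h
      · omega
    have hp := spin_mem hsp (hps.1 t)
    have hnm := noMinQ_spin hn hp hkodd (Hno t)
    rcases classify_spin_plus hn hε hp hkodd hnm with ⟨hsh, hv⟩ | ⟨c, hodd, hle, hv, hcor⟩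
    · intro x hx
      have hXB := (memCpB.mp hx).1
      rcases em (x.1 = n) with hxn | hxn
      · obtain ⟨x1, x2⟩ := x
        simp only at hxn
        rw [hxn] at hx
        obtain ⟨_, hmem, _⟩ := cornerN_elim_plus hx
        have hvv := spin_val_at hp hmem
        have hvZ : (pt (ps t) n).2 = (((w t).2 + 4*(n:ℤ) - 2 : ℤ):ℝ) + ε := by
          rw [hv]; push_cast; ring
        rw [hvZ] at hvv
        exact eps_ne_cross hε hvv.symm
      · have hxlt : x.1 < n := by
          rcases hXB with ⟨h, _⟩ | ⟨_, h, _⟩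
          · exact absurd h hxn
          · omega
        exact Hno t x hxlt hx
    · exfalso
      have hnotminus : ((n, c) : ℕ × ℤ) ∉ Cp (.B n ε) (ps t) false := by
        intro hc'
        obtain ⟨_, hmem, _⟩ := cornerN_elim_minus hc'
        have hvv := spin_val_at hp hmem
        rw [hv] at hvv
        linarith [hε.1]
      refine cancel_plus hn hε hw hps hD Hno hcor hnotminus ?_
      rw [if_pos hsp]
      omega
  · obtain ⟨h1i, hilt, hkev⟩ : 1 ≤ (w t).1 ∧ (w t).1 < n ∧ (w t).2 % 2 = 0 := by
      rcases hX with ⟨h, _⟩ | ⟨h1, h2, h3⟩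
      · exact absurd h hco
      · exact ⟨h1, h2, h3⟩
    obtain ⟨a, b, ha, hb, hab, hvab⟩ := comb_decomp hco (hps.1 t)
    have hnma := noMinQ_a hn ha hb hab hilt hkev (Hno t)
    have hnmb := noMinQ_b hn ha hb hab hilt hkev (Hno t)
    rcases classify_comb_plus hn hε hilt hkev ha hb hab hvab hnma hnmb with
      ⟨hva, hvb, hbpin, hash⟩ | ⟨c, hodd, hle, hcor⟩
    · intro x hx
      have hXB := (memCpB.mp hx).1
      rcases em (x.1 = n) with hxn | hxn
      · obtain ⟨x1, x2⟩ := x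
        simp only at hxn
        rw [hxn] at hx
        obtain ⟨_, hmem, hnot⟩ := cornerN_elim_plus hx
        have hpn : pt (ps t) n = ((2*(n:ℝ)-1, (pt a n).2) : ℝ × ℝ) := by
          rw [(comb_vals ha hb hab).1]; exact Prod.ext (spin_xn ha) rfl
        have hmem_n : ((2*(n:ℝ)-1, (pt a n).2) : ℝ × ℝ) ∈ ps t := by
          rw [← hpn]; exact pt_mem (by rw [comb_len ha hb hab]; omega)
        rcases comb_val_at ha hb hab hn hilt hkev hmem with hv1 | hv1
        · rw [hva] at hv1
          exact eps_ne_cross hε hv1.symm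
        · rw [hvb] at hv1
          have hx2 : x2 = (w t).2 - (2*(n:ℤ) - 2*((w t).1:ℤ) - 1) + 4*(n:ℤ) - 2 :=
            eps_inj_minus hε hv1
          apply hnot
          rw [hx2]
          rw [← hva]
          exact hmem_n
      · have hxlt : x.1 < n := by
          rcases hXB with ⟨h, _⟩ | ⟨_, h, _⟩
          · exact absurd h hxn
          · omega
        exact Hno t x hxlt hx
    · exfalso
      have hnotminus : ((n, c) : ℕ × ℤ) ∉ Cp (.B n ε) (ps t) false := by
        intro hc'
        obtain ⟨_, hmem, hnot2⟩ := cornerN_elim_minus hc'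
        obtain ⟨_, hmem2, _⟩ := cornerN_elim_plus hcor
        exact hnot2 hmem2
      refine cancel_plus hn hε hw hps hD Hno hcor hnotminus ?_
      rw [if_neg hco]
      omega

end MainB

/-! ### Type B : uniqueness and main lemma -/

section UniqueB
variable {n : ℕ} {ε : ℝ}
variable (hn : 2 ≤ n) (hε : 0 < ε ∧ ε < 1/2)

include hn hε in
lemma B_unique_minus {i : ℕ} {k : ℤ} (hik : (i, k) ∈ XB n)
    {p q : List (ℝ × ℝ)} (hp : p ∈ pathsB n ε i k) (hq : q ∈ pathsB n ε i k)
    (hCp : ∀ x, x ∉ Cp (.B n ε) p false) (hCq : ∀ x, x ∉ Cp (.B n ε) q false) : p = q := by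
  rcases em (i = n) with hsp | hco
  · have hkodd : k % 2 = 1 := by
      rcases hik with ⟨_, h⟩ | ⟨_, h, _⟩
      · exact h
      · omega
    have hp' := spin_mem hsp hp
    have hq' := spin_mem hsp hq
    have hnmp := noMaxQ_spin hn hp' hkodd (fun x _ => hCp x)
    have hnmq := noMaxQ_spin hn hq' hkodd (fun x _ => hCq x)
    rcases classify_spin_minus hn hε hp' hkodd hnmp with ⟨hshp, hvp⟩ | ⟨c, _, _, _, hcor⟩
    swap
    · exact absurd hcor (hCp _)
    rcases classify_spin_minus hn hε hq' hkodd hnmq with ⟨hshq, hvq⟩ | ⟨c, _, _, _, hcor⟩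
    swap
    · exact absurd hcor (hCq _)
    apply list_pt_ext (by rw [spin_len hp', spin_len hq'])
    intro r hr
    rw [spin_len hp'] at hr
    rcases Nat.lt_or_ge r n with hrn | hrn
    · refine Prod.ext ?_ (by rw [hshp r (by omega), hshq r (by omega)])
      rcases em (k % 4 = 3) with h4 | h4
      · rw [spin_x3 hp' h4 r hrn, spin_x3 hq' h4 r hrn]
      · rw [spin_x1 hp' h4 r hrn, spin_x1 hq' h4 r hrn]
    · have hreq : r = n := by omega
      rw [hreq]
      exact Prod.ext (by rw [spin_xn hp', spin_xn hq']) (by rw [hvp, hvq])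
  · obtain ⟨h1i, hilt, hkev⟩ : 1 ≤ i ∧ i < n ∧ k % 2 = 0 := by
      rcases hik with ⟨h, _⟩ | ⟨h1, h2, h3⟩
      · exact absurd h hco
      · exact ⟨h1, h2, h3⟩
    obtain ⟨a, b, ha, hb, hab, hvab⟩ := comb_decomp hco hp
    obtain ⟨a', b', ha', hb', hab', hvab'⟩ := comb_decomp hco hq
    have hnma := noMaxQ_a hn ha hb hab hilt hkev (fun x _ => hCp x)
    have hnmb := noMaxQ_b hn ha hb hab hilt hkev (fun x _ => hCp x)
    have hnma' := noMaxQ_a hn ha' hb' hab' hilt hkev (fun x _ => hCq x)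
    have hnmb' := noMaxQ_b hn ha' hb' hab' hilt hkev (fun x _ => hCq x)
    rcases classify_comb_minus hn hε hilt hkev ha hb hab hvab hnma hnmb with
      ⟨hvb, hva, hapin, hbsh⟩ | ⟨c, _, _, hcor⟩
    swap
    · exact absurd hcor (hCp _)
    rcases classify_comb_minus hn hε hilt hkev ha' hb' hab' hvab' hnma' hnmb' with
      ⟨hvb', hva', hapin', hbsh'⟩ | ⟨c, _, _, hcor⟩
    swap
    · exact absurd hcor (hCq _)
    have hbeq : b = b' := by
      apply list_pt_ext (by rw [spin_len hb, spin_len hb'])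
      intro r hr
      rw [spin_len hb] at hr
      rcases Nat.lt_or_ge r n with hrn | hrn
      · refine Prod.ext ?_ (by rw [hbsh r (by omega), hbsh' r (by omega)])
        rcases em ((k + (2*(n:ℤ) - 2*(i:ℤ) - 1)) % 4 = 3) with h4 | h4
        · rw [spin_x3 hb h4 r hrn, spin_x3 hb' h4 r hrn]
        · rw [spin_x1 hb h4 r hrn, spin_x1 hb' h4 r hrn]
      · have hreq : r = n := by omega
        rw [hreq]
        exact Prod.ext (by rw [spin_xn hb, spin_xn hb']) (by rw [hvb, hvb'])
    have hshapea := spin_shape_max hn ha hnma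
    have hshapea' := spin_shape_max hn ha' hnma'
    have haeq : a = a' := by
      apply list_pt_ext (by rw [spin_len ha, spin_len ha'])
      intro r hr
      rw [spin_len ha] at hr
      rcases Nat.lt_or_ge r n with hrn | hrn
      · refine Prod.ext ?_
          (by rw [hshapea r (by omega), hshapea' r (by omega), hapin, hapin'])
        rcases em ((k - (2*(n:ℤ) - 2*(i:ℤ) - 1)) % 4 = 3) with h4 | h4
        · rw [spin_x3 ha h4 r hrn, spin_x3 ha' h4 r hrn]
        · rw [spin_x1 ha h4 r hrn, spin_x1 ha' h4 r hrn]
      · have hreq : r = n := by omega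
        rw [hreq]
        exact Prod.ext (by rw [spin_xn ha, spin_xn ha']) (by rw [hva, hva'])
    rw [hab, hab', haeq, hbeq]

include hn hε in
lemma B_unique_plus {i : ℕ} {k : ℤ} (hik : (i, k) ∈ XB n)
    {p q : List (ℝ × ℝ)} (hp : p ∈ pathsB n ε i k) (hq : q ∈ pathsB n ε i k)
    (hCp : ∀ x, x ∉ Cp (.B n ε) p true) (hCq : ∀ x, x ∉ Cp (.B n ε) q true) : p = q := by
  rcases em (i = n) with hsp | hco
  · have hkodd : k % 2 = 1 := by
      rcases hik with ⟨_, h⟩ | ⟨_, h, _⟩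
      · exact h
      · omega
    have hp' := spin_mem hsp hp
    have hq' := spin_mem hsp hq
    have hnmp := noMinQ_spin hn hp' hkodd (fun x _ => hCp x)
    have hnmq := noMinQ_spin hn hq' hkodd (fun x _ => hCq x)
    rcases classify_spin_plus hn hε hp' hkodd hnmp with ⟨hshp, hvp⟩ | ⟨c, _, _, _, hcor⟩
    swap
    · exact absurd hcor (hCp _)
    rcases classify_spin_plus hn hε hq' hkodd hnmq with ⟨hshq, hvq⟩ | ⟨c, _, _, _, hcor⟩
    swap
    · exact absurd hcor (hCq _)
    apply list_pt_ext (by rw [spin_len hp', spin_len hq'])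
    intro r hr
    rw [spin_len hp'] at hr
    rcases Nat.lt_or_ge r n with hrn | hrn
    · refine Prod.ext ?_ (by rw [hshp r (by omega), hshq r (by omega)])
      rcases em (k % 4 = 3) with h4 | h4
      · rw [spin_x3 hp' h4 r hrn, spin_x3 hq' h4 r hrn]
      · rw [spin_x1 hp' h4 r hrn, spin_x1 hq' h4 r hrn]
    · have hreq : r = n := by omega
      rw [hreq]
      exact Prod.ext (by rw [spin_xn hp', spin_xn hq']) (by rw [hvp, hvq])
  · obtain ⟨h1i, hilt, hkev⟩ : 1 ≤ i ∧ i < n ∧ k % 2 = 0 := by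
      rcases hik with ⟨h, _⟩ | ⟨h1, h2, h3⟩
      · exact absurd h hco
      · exact ⟨h1, h2, h3⟩
    obtain ⟨a, b, ha, hb, hab, hvab⟩ := comb_decomp hco hp
    obtain ⟨a', b', ha', hb', hab', hvab'⟩ := comb_decomp hco hq
    have hnma := noMinQ_a hn ha hb hab hilt hkev (fun x _ => hCp x)
    have hnmb := noMinQ_b hn ha hb hab hilt hkev (fun x _ => hCp x)
    have hnma' := noMinQ_a hn ha' hb' hab' hilt hkev (fun x _ => hCq x)
    have hnmb' := noMinQ_b hn ha' hb' hab' hilt hkev (fun x _ => hCq x)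
    rcases classify_comb_plus hn hε hilt hkev ha hb hab hvab hnma hnmb with
      ⟨hva, hvb, hbpin, hash⟩ | ⟨c, _, _, hcor⟩
    swap
    · exact absurd hcor (hCp _)
    rcases classify_comb_plus hn hε hilt hkev ha' hb' hab' hvab' hnma' hnmb' with
      ⟨hva', hvb', hbpin', hash'⟩ | ⟨c, _, _, hcor⟩
    swap
    · exact absurd hcor (hCq _)
    have haeq : a = a' := by
      apply list_pt_ext (by rw [spin_len ha, spin_len ha'])
      intro r hr
      rw [spin_len ha] at hr
      rcases Nat.lt_or_ge r n with hrn | hrn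
      · refine Prod.ext ?_ (by rw [hash r (by omega), hash' r (by omega)])
        rcases em ((k - (2*(n:ℤ) - 2*(i:ℤ) - 1)) % 4 = 3) with h4 | h4
        · rw [spin_x3 ha h4 r hrn, spin_x3 ha' h4 r hrn]
        · rw [spin_x1 ha h4 r hrn, spin_x1 ha' h4 r hrn]
      · have hreq : r = n := by omega
        rw [hreq]
        exact Prod.ext (by rw [spin_xn ha, spin_xn ha']) (by rw [hva, hva'])
    have hshapeb := spin_shape_min hn hb hnmb
    have hshapeb' := spin_shape_min hn hb' hnmb'
    have hbeq : b = b' := by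
      apply list_pt_ext (by rw [spin_len hb, spin_len hb'])
      intro r hr
      rw [spin_len hb] at hr
      rcases Nat.lt_or_ge r n with hrn | hrn
      · refine Prod.ext ?_
          (by rw [hshapeb r (by omega), hshapeb' r (by omega), hbpin, hbpin'])
        rcases em ((k + (2*(n:ℤ) - 2*(i:ℤ) - 1)) % 4 = 3) with h4 | h4
        · rw [spin_x3 hb h4 r hrn, spin_x3 hb' h4 r hrn]
        · rw [spin_x1 hb h4 r hrn, spin_x1 hb' h4 r hrn]
      · have hreq : r = n := by omega
        rw [hreq]
        exact Prod.ext (by rw [spin_xn hb, spin_xn hb']) (by rw [hvb, hvb'])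
    rw [hab, hab', haeq, hbeq]

include hn hε in
lemma mainB {T : ℕ} {w : Fin T → ℕ × ℤ} {ps : Fin T → List (ℝ × ℝ)}
    (hw : IsSnake (.B n ε) w) (hps : ps ∈ PBar (.B n ε) w) :
    (Dominant (tmon (.B n ε) ps) → ps = fun t => highestPath (.B n ε) (w t).1 (w t).2) ∧
    (AntiDominant (tmon (.B n ε) ps) → ps = fun t => lowestPath (.B n ε) (w t).1 (w t).2) := by
  constructor
  · intro hD
    funext t
    have hempty := B_empty_minus hn hε hw hps hD t
    have hsat : ∃ p, p ∈ P (.B n ε) (w t).1 (w t).2 ∧ Cp (.B n ε) p false = ∅ :=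
      ⟨ps t, hps.1 t, Set.eq_empty_iff_forall_notMem.mpr hempty⟩
    have hspec := Classical.epsilon_spec hsat
    exact B_unique_minus hn hε (hw.1 t) (hps.1 t) hspec.1 hempty
      (Set.eq_empty_iff_forall_notMem.mp hspec.2)
  · intro hD
    funext t
    have hempty := B_empty_plus hn hε hw hps hD t
    have hsat : ∃ p, p ∈ P (.B n ε) (w t).1 (w t).2 ∧ Cp (.B n ε) p true = ∅ :=
      ⟨ps t, hps.1 t, Set.eq_empty_iff_forall_notMem.mpr hempty⟩
    have hspec := Classical.epsilon_spec hsat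
    exact B_unique_plus hn hε (hw.1 t) (hps.1 t) hspec.1 hempty
      (Set.eq_empty_iff_forall_notMem.mp hspec.2)

end UniqueB

/-- if `(p_t) ∈ 𝒫̄` differs from the tuple of highest paths then `∏ m(p_t)` is
not dominant, and if it differs from the tuple of lowest paths then `∏ m(p_t)` is not
anti-dominant. -/
theorem stmt13 (S : Setting) (hS : S.valid) {T : ℕ} (hT : 1 ≤ T)
    (w : Fin T → ℕ × ℤ) (hw : IsSnake S w)
    (ps : Fin T → List (ℝ × ℝ)) (hps : ps ∈ PBar S w) :
    (ps ≠ (fun t => highestPath S (w t).1 (w t).2) → ¬ Dominant (tmon S ps)) ∧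
    (ps ≠ (fun t => lowestPath S (w t).1 (w t).2) → ¬ AntiDominant (tmon S ps)) := by
  cases S with
  | A n =>
    have h := mainA hps
    exact ⟨fun hne hD => hne (h.1 hD), fun hne hD => hne (h.2 hD)⟩
  | B n ε =>
    obtain ⟨hn, hε1, hε2⟩ := hS
    have h := mainB hn ⟨hε1, hε2⟩ hw hps
    exact ⟨fun hne hD => hne (h.1 hD), fun hne hD => hne (h.2 hD)⟩

end Paper
end

section
/- Let the setting be type A_N or type B_N and let T ≥ 1. The map sending a snake (i_t,k_t), 1 ≤ t ≤ T, with all elements in X′, to the set D = {(s,t) ∈ ℤ×ℤ : 1 ≤ t ≤ T, t − k_t/(2r^∨) − (i_t−1)/2 ≤ s ≤ t − k_t/(2r^∨) + (i_t−1)/2} is a bijection from the set of snakes of length T with elements in X′ onto the set of skew diagrams whose non-empty columns are exactly 1, 2, …, T and none of whose columns contains more than N boxes in type A, respectively more than N−1 boxes in type B. -/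
namespace Paper

/-- `r^∨`: `1` in type A, `2` in type B. -/
def rd : Setting → ℤ
  | .A _ => 1
  | .B _ _ => 2

/-- The subset `X' ⊆ X`: all of `X` in type A; in type B, the points `(i,k)` with
`i < N` and `2i - k ≡ 2 (mod 4)`. -/
def Xp : Setting → Set (ℕ × ℤ)
  | .A n => XA n
  | .B n _ => {ik | ik ∈ XB n ∧ ik.1 < n ∧ (2 * (ik.1 : ℤ) - ik.2) % 4 = 2}

/-- A skew diagram: a finite subset of `ℤ × ℤ_{>0}` such that (1) if nonempty it has a box
in column 1, and (2) if `(i,j)` is not a box then either nothing weakly to its lower-right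
is a box, or nothing weakly to its upper-left is a box. -/
def IsSkewDiagram (D : Set (ℤ × ℤ)) : Prop :=
  D.Finite ∧ (∀ q ∈ D, 0 < q.2) ∧
  (D.Nonempty → ∃ i : ℤ, (i, 1) ∈ D) ∧
  (∀ i j : ℤ, 0 < j → (i, j) ∉ D →
    (∀ i' j' : ℤ, i ≤ i' → j ≤ j' → (i', j') ∉ D) ∨
    (∀ i' j' : ℤ, i' ≤ i → j' ≤ j → (i', j') ∉ D))

/-- The skew diagram attached to a snake `(i_t, k_t)`, `1 ≤ t ≤ T` (here indexed by `Fin T`):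
the boxes `(s,t)` with `1 ≤ t ≤ T` and
`t - k_t/(2 r^∨) - (i_t - 1)/2 ≤ s ≤ t - k_t/(2 r^∨) + (i_t - 1)/2`
(the inequalities are stated multiplied through by `2 r^∨ > 0`). -/
def diagOf (S : Setting) {T : ℕ} (w : Fin T → ℕ × ℤ) : Set (ℤ × ℤ) :=
  {q | ∃ t : Fin T, q.2 = (t : ℤ) + 1 ∧
    2 * rd S * ((t : ℤ) + 1) - (w t).2 - rd S * (((w t).1 : ℤ) - 1) ≤ 2 * rd S * q.1 ∧
    2 * rd S * q.1 ≤ 2 * rd S * ((t : ℤ) + 1) - (w t).2 + rd S * (((w t).1 : ℤ) - 1)}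

/-- The maximal number of boxes allowed in a column: `N` in type A, `N - 1` in type B. -/
def colBound : Setting → ℕ
  | .A n => n
  | .B n _ => n - 1

/-- Type A skew tableaux of shape `D` (encoded as functions `ℤ × ℤ → ℕ` vanishing off `D`):
entries in the alphabet `{1, …, N+1}`, weakly increasing along rows, strictly increasing
down columns. -/
def TabA (n : ℕ) (D : Set (ℤ × ℤ)) : Set (ℤ × ℤ → ℕ) :=
  {f | (∀ q ∈ D, 1 ≤ f q ∧ f q ≤ n + 1) ∧ (∀ q ∉ D, f q = 0) ∧
    (∀ i j : ℤ, (i, j) ∈ D → (i, j + 1) ∈ D → f (i, j) ≤ f (i, j + 1)) ∧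
    (∀ i j : ℤ, (i, j) ∈ D → (i + 1, j) ∈ D → f (i, j) < f (i + 1, j))}

/-- The type A box monomial `⟦a⟧_k = Y_{a-1, a+k}⁻¹ Y_{a, a-1+k}`, with the conventions
`Y_{0,·} = Y_{N+1,·} = 1`. -/
def boxA (n : ℕ) (a : ℕ) (k : ℤ) : (ℕ × ℤ) → ℤ :=
  (if a = n + 1 then 0 else Y (a, (a : ℤ) - 1 + k)) -
    (if a = 1 then 0 else Y (a - 1, (a : ℤ) + k))

/-- The monomial `M(𝒯)` of a type A skew tableau. -/
noncomputable def MtabA (n : ℕ) (D : Set (ℤ × ℤ)) (f : ℤ × ℤ → ℕ) : (ℕ × ℤ) → ℤ :=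
  ∑ᶠ q ∈ D, boxA n (f q) (2 * (q.2 - q.1))

/-- The type B alphabet `{1, …, N, 0, N̄, …, 1̄}`, encoded in `ℤ` with the barred letter
`ā` encoded as `-a`. -/
def alphabetB (n : ℕ) : Set ℤ :=
  {a | (1 ≤ a ∧ a ≤ (n : ℤ)) ∨ a = 0 ∨ (-(n : ℤ) ≤ a ∧ a ≤ -1)}

/-- The position of a type B letter in the alphabetical order
`1 < 2 < ⋯ < N < 0 < N̄ < ⋯ < 2̄ < 1̄`. -/
def ordB (n : ℕ) (a : ℤ) : ℤ :=
  if 1 ≤ a then a else if a = 0 then (n : ℤ) + 1 else 2 * (n : ℤ) + 2 + a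

/-- Type B skew tableaux of shape `D` (encoded as functions `ℤ × ℤ → ℤ` vanishing off `D`). -/
def TabB (n : ℕ) (D : Set (ℤ × ℤ)) : Set (ℤ × ℤ → ℤ) :=
  {f | (∀ q ∈ D, f q ∈ alphabetB n) ∧ (∀ q ∉ D, f q = 0) ∧
    (∀ i j : ℤ, (i, j) ∈ D → (i, j + 1) ∈ D →
      ordB n (f (i, j)) ≤ ordB n (f (i, j + 1)) ∧ ¬(f (i, j) = 0 ∧ f (i, j + 1) = 0)) ∧
    (∀ i j : ℤ, (i, j) ∈ D → (i + 1, j) ∈ D →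
      ordB n (f (i, j)) < ordB n (f (i + 1, j)) ∨ (f (i, j) = 0 ∧ f (i + 1, j) = 0))}

/-- The type B box monomials `⟦a⟧_k`, with the convention `Y_{0,·} = 1`. -/
def boxB (n : ℕ) (a : ℤ) (k : ℤ) : (ℕ × ℤ) → ℤ :=
  if a = 0 then Y (n, 2 * (n : ℤ) - 3 + k) - Y (n, 2 * (n : ℤ) + 1 + k)
  else if a = (n : ℤ) then
    Y (n, 2 * (n : ℤ) - 3 + k) + Y (n, 2 * (n : ℤ) - 1 + k) - Y (n - 1, 2 * (n : ℤ) + k)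
  else if a = -(n : ℤ) then
    Y (n - 1, 2 * (n : ℤ) - 2 + k) - Y (n, 2 * (n : ℤ) - 1 + k) - Y (n, 2 * (n : ℤ) + 1 + k)
  else if 1 ≤ a then
    Y (a.toNat, 2 * a - 2 + k) - (if a = 1 then 0 else Y (a.toNat - 1, 2 * a + k))
  else
    (if a = -1 then 0 else Y ((-a).toNat - 1, 4 * (n : ℤ) - 2 - 2 * (-a) + k)) -
      Y ((-a).toNat, 4 * (n : ℤ) - 2 * (-a) + k)

/-- The monomial `M(𝒯)` of a type B skew tableau. -/
noncomputable def MtabB (n : ℕ) (D : Set (ℤ × ℤ)) (f : ℤ × ℤ → ℤ) : (ℕ × ℤ) → ℤ :=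
  ∑ᶠ q ∈ D, boxB n (f q) (4 * (q.2 - q.1))


section StmtAux

lemma rd_pos (S : Setting) : 0 < rd S := by cases S <;> simp [rd]

lemma Xp_spec (S : Setting) {ik : ℕ × ℤ} (h : ik ∈ Xp S) :
    1 ≤ ik.1 ∧ ik.1 ≤ colBound S ∧
      ∃ m : ℤ, ik.2 = 2 * rd S * m - rd S * ((ik.1 : ℤ) - 1) := by
  cases S with
  | A n =>
    obtain ⟨h1, h2, h3⟩ := h
    exact ⟨h1, h2, ⟨(ik.2 + ik.1 - 1) / 2, by simp only [rd]; omega⟩⟩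
  | B n ε =>
    obtain ⟨hX, hlt, hmod⟩ := h
    rcases hX with ⟨he, _⟩ | ⟨h1, _, h2⟩
    · omega
    · exact ⟨h1, by simp only [colBound]; omega,
        ⟨(ik.2 + 2 * ik.1 - 2) / 4, by simp only [rd]; omega⟩⟩

lemma Xp_of (S : Setting) (hS : S.valid) {i : ℕ} {k : ℤ} (h1 : 1 ≤ i)
    (h2 : i ≤ colBound S) (m : ℤ) (hk : k = 2 * rd S * m - rd S * ((i : ℤ) - 1)) :
    (i, k) ∈ Xp S := by
  cases S with
  | A n => exact ⟨h1, h2, by simp only [rd] at hk; omega⟩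
  | B n ε =>
    simp only [Setting.valid] at hS
    simp only [colBound] at h2
    simp only [rd] at hk
    have hlt : i < n := by omega
    exact ⟨Or.inr ⟨h1, hlt, by omega⟩, hlt, by omega⟩

lemma Xp_sub_X (S : Setting) {ik : ℕ × ℤ} (h : ik ∈ Xp S) : ik ∈ X S := by
  cases S with
  | A n => exact h
  | B n ε => exact h.1

lemma snakePos_iff (S : Setting) {ik ik' : ℕ × ℤ} (h : ik ∈ Xp S) (h' : ik' ∈ Xp S)
    {m m' : ℤ} (hm : ik.2 = 2 * rd S * m - rd S * ((ik.1 : ℤ) - 1))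
    (hm' : ik'.2 = 2 * rd S * m' - rd S * ((ik'.1 : ℤ) - 1)) :
    SnakePos S ik ik' ↔
      m + 1 ≤ m' ∧ m - ((ik.1 : ℤ) - 1) + 1 ≤ m' - ((ik'.1 : ℤ) - 1) := by
  cases S with
  | A n =>
    simp only [rd] at hm hm'
    show |(ik'.1 : ℤ) - (ik.1 : ℤ)| + 2 ≤ ik'.2 - ik.2 ↔ _
    rcases abs_cases ((ik'.1 : ℤ) - (ik.1 : ℤ)) with ⟨h4, h5⟩ | ⟨h4, h5⟩ <;>
      rw [h4] <;> omega
  | B n ε =>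
    simp only [rd] at hm hm'
    obtain ⟨_, hlt, hmod⟩ := h
    obtain ⟨_, hlt', hmod'⟩ := h'
    show (if ik.1 = n ∧ ik'.1 = n then _ else if ik.1 = n ∨ ik'.1 = n then _ else _) ↔ _
    rw [if_neg (by omega), if_neg (by omega)]
    rcases abs_cases ((ik'.1 : ℤ) - (ik.1 : ℤ)) with ⟨h4, h5⟩ | ⟨h4, h5⟩ <;>
      rw [h4] <;> omega

lemma mem_diagOf (S : Setting) {T : ℕ} {w : Fin T → ℕ × ℤ} (m : Fin T → ℤ)
    (hm : ∀ t, (w t).2 = 2 * rd S * m t - rd S * (((w t).1 : ℤ) - 1)) (a b : ℤ) :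
    (a, b) ∈ diagOf S w ↔ ∃ t : Fin T, b = (t : ℤ) + 1 ∧
      (t : ℤ) + 1 - m t ≤ a ∧ a ≤ (t : ℤ) + 1 - m t + (((w t).1 : ℤ) - 1) := by
  cases S with
  | A n =>
    simp only [rd] at hm
    simp only [diagOf, Set.mem_setOf_eq, rd]
    constructor
    · rintro ⟨t, h1, h2, h3⟩
      exact ⟨t, h1, by have := hm t; omega, by have := hm t; omega⟩
    · rintro ⟨t, h1, h2, h3⟩
      exact ⟨t, h1, by have := hm t; omega, by have := hm t; omega⟩
  | B n ε =>
    simp only [rd] at hm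
    simp only [diagOf, Set.mem_setOf_eq, rd]
    constructor
    · rintro ⟨t, h1, h2, h3⟩
      exact ⟨t, h1, by have := hm t; omega, by have := hm t; omega⟩
    · rintro ⟨t, h1, h2, h3⟩
      exact ⟨t, h1, by have := hm t; omega, by have := hm t; omega⟩

lemma snake_antitone (S : Setting) {T : ℕ} {w : Fin T → ℕ × ℤ}
    (hx : ∀ t, w t ∈ Xp S) (hsn : IsSnake S w) (m : Fin T → ℤ)
    (hm : ∀ t, (w t).2 = 2 * rd S * m t - rd S * (((w t).1 : ℤ) - 1)) :
    ∀ s t : Fin T, (s : ℕ) ≤ (t : ℕ) →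
      ((t : ℤ) + 1 - m t ≤ (s : ℤ) + 1 - m s) ∧
      ((t : ℤ) + 1 - m t + (((w t).1 : ℤ) - 1) ≤
        (s : ℤ) + 1 - m s + (((w s).1 : ℤ) - 1)) := by
  have step : ∀ (s : Fin T) (h : (s : ℕ) + 1 < T),
      m s + 1 ≤ m ⟨(s : ℕ) + 1, h⟩ ∧
      m s - (((w s).1 : ℤ) - 1) + 1 ≤
        m ⟨(s : ℕ) + 1, h⟩ - (((w ⟨(s : ℕ) + 1, h⟩).1 : ℤ) - 1) := by
    intro s h
    have := hsn.2 s h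
    rwa [snakePos_iff S (hx s) (hx ⟨(s : ℕ) + 1, h⟩) (hm s) (hm _)] at this
  suffices H : ∀ (d : ℕ) (s t : Fin T), (t : ℕ) = (s : ℕ) + d →
      m s + d ≤ m t ∧ m s - (((w s).1 : ℤ) - 1) + d ≤ m t - (((w t).1 : ℤ) - 1) by
    intro s t hst
    obtain ⟨h1, h2⟩ := H ((t : ℕ) - (s : ℕ)) s t (by omega)
    constructor <;> [skip; skip] <;> · push_cast at h1 h2 ⊢; omega
  intro d
  induction d with
  | zero =>
    intro s t hst
    have : s = t := Fin.ext (by omega)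
    subst this; simp
  | succ d ih =>
    intro s t hst
    have hmid : (s : ℕ) + d < T := by have := t.isLt; omega
    obtain ⟨h1, h2⟩ := ih s ⟨(s : ℕ) + d, hmid⟩ rfl
    have hmid2 : ((⟨(s : ℕ) + d, hmid⟩ : Fin T) : ℕ) + 1 < T := by
      have := t.isLt; simp; omega
    obtain ⟨h3, h4⟩ := step ⟨(s : ℕ) + d, hmid⟩ hmid2
    have ht : t = ⟨(s : ℕ) + d + 1, by simpa using hmid2⟩ := Fin.ext (by simp; omega)
    subst ht
    have he : (⟨((⟨(s : ℕ) + d, hmid⟩ : Fin T) : ℕ) + 1, hmid2⟩ : Fin T)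
        = ⟨(s : ℕ) + d + 1, by simpa using hmid2⟩ := Fin.ext rfl
    rw [he] at h3 h4
    push_cast at h1 h2 h3 h4 ⊢
    omega

end StmtAux

/-- the map sending a snake with elements in `X'` to its skew diagram is a
bijection from the set of snakes of length `T` with elements in `X'` onto the set of skew
diagrams whose non-empty columns are exactly `1, …, T` and none of whose columns has more
than `N` boxes (type A), resp. `N-1` boxes (type B). -/
theorem stmt14 (S : Setting) (hS : S.valid) (T : ℕ) (hT : 1 ≤ T) :
    Set.BijOn (fun w => diagOf S w)
      {w : Fin T → ℕ × ℤ | (∀ t, w t ∈ Xp S) ∧ IsSnake S w}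
      {D : Set (ℤ × ℤ) | IsSkewDiagram D ∧
        (∀ j : ℤ, (∃ i : ℤ, (i, j) ∈ D) ↔ 1 ≤ j ∧ j ≤ (T : ℤ)) ∧
        (∀ j : ℤ, {i : ℤ | (i, j) ∈ D}.ncard ≤ colBound S)} := by
  refine ⟨?_, ?_, ?_⟩
  · -- MapsTo
    rintro w ⟨hwx, hsn⟩
    choose m hm using fun t => (Xp_spec S (hwx t)).2.2
    have hi1 : ∀ t, 1 ≤ (w t).1 := fun t => (Xp_spec S (hwx t)).1
    have hib : ∀ t, (w t).1 ≤ colBound S := fun t => (Xp_spec S (hwx t)).2.1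
    have key : ∀ a b : ℤ, (a, b) ∈ diagOf S w ↔ ∃ t : Fin T, b = (t : ℤ) + 1 ∧
        (t : ℤ) + 1 - m t ≤ a ∧ a ≤ (t : ℤ) + 1 - m t + (((w t).1 : ℤ) - 1) :=
      mem_diagOf S m hm
    have hmono := snake_antitone S hwx hsn m hm
    refine ⟨⟨?_, ?_, ?_, ?_⟩, ?_, ?_⟩
    · -- finite
      refine Set.Finite.subset (Set.finite_iUnion (fun t : Fin T =>
        (Set.finite_Icc ((t : ℤ) + 1 - m t)
          ((t : ℤ) + 1 - m t + (((w t).1 : ℤ) - 1))).prod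
          (Set.finite_singleton ((t : ℤ) + 1)))) ?_
      rintro ⟨a, b⟩ hq
      rw [key] at hq
      obtain ⟨t, h1, h2, h3⟩ := hq
      exact Set.mem_iUnion.2 ⟨t, Set.mem_prod.2 ⟨Set.mem_Icc.2 ⟨h2, h3⟩, h1⟩⟩
    · -- positivity of column index
      rintro ⟨a, b⟩ hq
      rw [key] at hq
      obtain ⟨t, h1, _, _⟩ := hq
      simp only
      omega
    · -- box in column 1
      intro _
      refine ⟨(((⟨0, hT⟩ : Fin T) : ℤ)) + 1 - m ⟨0, hT⟩, (key _ _).2 ⟨⟨0, hT⟩, rfl, le_rfl, ?_⟩⟩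
      have := hi1 ⟨0, hT⟩
      omega
    · -- skew condition
      intro i j hj hnot
      by_cases hjT : j ≤ (T : ℤ)
      · have hlt : (j - 1).toNat < T := by omega
        set t : Fin T := ⟨(j - 1).toNat, hlt⟩ with htdef
        have htj : ((t : ℕ) : ℤ) = j - 1 := by simp [htdef]; omega
        have hnotc : i < (t : ℤ) + 1 - m t ∨
            (t : ℤ) + 1 - m t + (((w t).1 : ℤ) - 1) < i := by
          by_contra hc
          push_neg at hc
          exact hnot ((key i j).2 ⟨t, by omega, hc.1, hc.2⟩)
        rcases hnotc with hlt2 | hgt2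
        · right
          intro i' j' hi' hj' hq
          obtain ⟨t', h1, h2, h3⟩ := (key i' j').1 hq
          have hle : (t' : ℕ) ≤ (t : ℕ) := by omega
          obtain ⟨ha, _⟩ := hmono t' t hle
          omega
        · left
          intro i' j' hi' hj' hq
          obtain ⟨t', h1, h2, h3⟩ := (key i' j').1 hq
          have hle : (t : ℕ) ≤ (t' : ℕ) := by omega
          obtain ⟨_, hb⟩ := hmono t t' hle
          omega
      · left
        intro i' j' _ hj' hq
        obtain ⟨t', h1, _, _⟩ := (key i' j').1 hq
        have := t'.isLt
        omega
    · -- columns exactly 1..T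
      intro j
      constructor
      · rintro ⟨i, hij⟩
        obtain ⟨t, h1, _, _⟩ := (key i j).1 hij
        have := t.isLt
        omega
      · rintro ⟨hj1, hjT⟩
        have hlt : (j - 1).toNat < T := by omega
        refine ⟨(((⟨(j - 1).toNat, hlt⟩ : Fin T) : ℤ)) + 1 - m ⟨(j - 1).toNat, hlt⟩,
          (key _ _).2 ⟨⟨(j - 1).toNat, hlt⟩, ?_, le_rfl, ?_⟩⟩
        · simp only [Fin.val_mk]; omega
        · have := hi1 ⟨(j - 1).toNat, hlt⟩
          omega
    · -- column bound
      intro j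
      by_cases hj : 1 ≤ j ∧ j ≤ (T : ℤ)
      · have hlt : (j - 1).toNat < T := by omega
        set t : Fin T := ⟨(j - 1).toNat, hlt⟩ with htdef
        have htj : ((t : ℕ) : ℤ) = j - 1 := by simp [htdef]; omega
        have hset : {i : ℤ | (i, j) ∈ diagOf S w} =
            Set.Icc ((t : ℤ) + 1 - m t) ((t : ℤ) + 1 - m t + (((w t).1 : ℤ) - 1)) := by
          ext i
          simp only [Set.mem_setOf_eq, Set.mem_Icc]
          rw [key i j]
          constructor
          · rintro ⟨t', h1, h2, h3⟩
            have : t' = t := Fin.ext (by omega)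
            subst this
            exact ⟨h2, h3⟩
          · rintro ⟨h2, h3⟩
            exact ⟨t, by omega, h2, h3⟩
        rw [hset, ← Finset.coe_Icc, Set.ncard_coe_finset, Int.card_Icc]
        have h1 := hi1 t
        have h2 := hib t
        omega
      · have hset : {i : ℤ | (i, j) ∈ diagOf S w} = ∅ := by
          ext i
          simp only [Set.mem_setOf_eq, Set.mem_empty_iff_false, iff_false]
          intro hq
          obtain ⟨t, h1, _, _⟩ := (key i j).1 hq
          have := t.isLt
          omega
        simp [hset]
  · -- InjOn
    rintro w ⟨hwx, hsn⟩ w' ⟨hwx', hsn'⟩ heq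
    have heq' : diagOf S w = diagOf S w' := heq
    choose m hm using fun t => (Xp_spec S (hwx t)).2.2
    choose m' hm' using fun t => (Xp_spec S (hwx' t)).2.2
    have key := mem_diagOf S m hm
    have key' := mem_diagOf S m' hm'
    have hi1 : ∀ t, 1 ≤ (w t).1 := fun t => (Xp_spec S (hwx t)).1
    have hi1' : ∀ t, 1 ≤ (w' t).1 := fun t => (Xp_spec S (hwx' t)).1
    funext t
    have hA : ((t : ℤ) + 1 - m t, (t : ℤ) + 1) ∈ diagOf S w :=
      (key _ _).2 ⟨t, rfl, le_rfl, by have := hi1 t; omega⟩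
    have hB : ((t : ℤ) + 1 - m t + (((w t).1 : ℤ) - 1), (t : ℤ) + 1) ∈ diagOf S w :=
      (key _ _).2 ⟨t, rfl, by have := hi1 t; omega, le_rfl⟩
    have hA' : ((t : ℤ) + 1 - m' t, (t : ℤ) + 1) ∈ diagOf S w' :=
      (key' _ _).2 ⟨t, rfl, le_rfl, by have := hi1' t; omega⟩
    have hB' : ((t : ℤ) + 1 - m' t + (((w' t).1 : ℤ) - 1), (t : ℤ) + 1) ∈ diagOf S w' :=
      (key' _ _).2 ⟨t, rfl, by have := hi1' t; omega, le_rfl⟩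
    rw [heq'] at hA hB
    rw [← heq'] at hA' hB'
    obtain ⟨t1, e1, f1, g1⟩ := (key' _ _).1 hA
    obtain ⟨t2, e2, f2, g2⟩ := (key' _ _).1 hB
    obtain ⟨t3, e3, f3, g3⟩ := (key _ _).1 hA'
    obtain ⟨t4, e4, f4, g4⟩ := (key _ _).1 hB'
    have ht1 : t1 = t := Fin.ext (by omega)
    have ht2 : t2 = t := Fin.ext (by omega)
    have ht3 : t3 = t := Fin.ext (by omega)
    have ht4 : t4 = t := Fin.ext (by omega)
    rw [ht1] at e1 f1 g1
    rw [ht2] at e2 f2 g2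
    rw [ht3] at e3 f3 g3
    rw [ht4] at e4 f4 g4
    have hieq : (w t).1 = (w' t).1 := by omega
    have hmeq : m t = m' t := by omega
    have hkeq : (w t).2 = (w' t).2 := by rw [hm t, hm' t, hmeq, hieq]
    exact Prod.ext hieq hkeq
  · -- SurjOn
    rintro D ⟨⟨hfin, hpos, hcol1, hskew⟩, hcols, hnc⟩
    have hCfin : ∀ j : ℤ, {i : ℤ | (i, j) ∈ D}.Finite := by
      intro j
      have hpre : {i : ℤ | (i, j) ∈ D} = (fun i : ℤ => (i, j)) ⁻¹' D := rfl
      rw [hpre]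
      exact hfin.preimage (fun a _ b _ h => congrArg Prod.fst h)
    obtain ⟨α, β, hαβ⟩ : ∃ α β : Fin T → ℤ, ∀ t : Fin T,
        (α t, (t : ℤ) + 1) ∈ D ∧ (β t, (t : ℤ) + 1) ∈ D ∧
        ∀ i : ℤ, (i, (t : ℤ) + 1) ∈ D → α t ≤ i ∧ i ≤ β t := by
      have hne : ∀ t : Fin T, ((hCfin ((t : ℤ) + 1)).toFinset).Nonempty := by
        intro t
        obtain ⟨i, hi⟩ := (hcols ((t : ℤ) + 1)).2
          ⟨by omega, by have := t.isLt; omega⟩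
        exact ⟨i, (Set.Finite.mem_toFinset _).2 hi⟩
      have hmemF : ∀ (t : Fin T) (i : ℤ),
          i ∈ (hCfin ((t : ℤ) + 1)).toFinset ↔ (i, (t : ℤ) + 1) ∈ D := by
        intro t i
        rw [Set.Finite.mem_toFinset]
        exact Iff.rfl
      refine ⟨fun t => ((hCfin ((t : ℤ) + 1)).toFinset).min' (hne t),
              fun t => ((hCfin ((t : ℤ) + 1)).toFinset).max' (hne t), ?_⟩
      intro t
      refine ⟨(hmemF t _).1 (Finset.min'_mem _ (hne t)),
              (hmemF t _).1 (Finset.max'_mem _ (hne t)), ?_⟩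
      intro i hi
      exact ⟨Finset.min'_le _ _ ((hmemF t i).2 hi),
             Finset.le_max' _ _ ((hmemF t i).2 hi)⟩
    have hint : ∀ (t : Fin T) (i : ℤ), (i, (t : ℤ) + 1) ∈ D ↔ α t ≤ i ∧ i ≤ β t := by
      intro t i
      constructor
      · exact fun h => (hαβ t).2.2 i h
      · rintro ⟨h1, h2⟩
        by_contra hnot
        rcases hskew i ((t : ℤ) + 1) (by omega) hnot with hL | hR
        · exact hL (β t) ((t : ℤ) + 1) h2 le_rfl (hαβ t).2.1
        · exact hR (α t) ((t : ℤ) + 1) h1 le_rfl (hαβ t).1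
    have hab : ∀ t, α t ≤ β t := fun t => ((hαβ t).2.2 _ (hαβ t).1).2
    have hmono : ∀ (t : Fin T) (h : (t : ℕ) + 1 < T),
        α ⟨(t : ℕ) + 1, h⟩ ≤ α t ∧ β ⟨(t : ℕ) + 1, h⟩ ≤ β t := by
      intro t h
      set t' : Fin T := ⟨(t : ℕ) + 1, h⟩ with ht'def
      have ht' : ((t' : ℕ) : ℤ) = ((t : ℕ) : ℤ) + 1 := by simp [ht'def]
      constructor
      · by_contra hlt
        push_neg at hlt
        have h1 : (α t, (t' : ℤ) + 1) ∉ D := by rw [hint t']; omega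
        rcases hskew (α t) ((t' : ℤ) + 1) (by omega) h1 with hL | hR
        · exact hL (α t') ((t' : ℤ) + 1) (by omega) le_rfl (hαβ t').1
        · exact hR (α t) ((t : ℤ) + 1) le_rfl (by omega) (hαβ t).1
      · by_contra hlt
        push_neg at hlt
        have h1 : (β t', (t : ℤ) + 1) ∉ D := by rw [hint t]; omega
        rcases hskew (β t') ((t : ℤ) + 1) (by omega) h1 with hL | hR
        · exact hL (β t') ((t' : ℤ) + 1) le_rfl (by omega) (hαβ t').2.1
        · exact hR (β t) ((t : ℤ) + 1) (by omega) le_rfl (hαβ t).2.1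
    have hcast : ∀ t : Fin T, (((β t - α t + 1).toNat : ℕ) : ℤ) = β t - α t + 1 :=
      fun t => by have := hab t; omega
    refine ⟨fun t => ((β t - α t + 1).toNat,
      2 * rd S * ((t : ℤ) + 1 - α t) - rd S * (((β t - α t + 1).toNat : ℤ) - 1)), ⟨?_, ?_⟩, ?_⟩
    · -- in Xp
      intro t
      refine Xp_of S hS ?_ ?_ ((t : ℤ) + 1 - α t) rfl
      · have := hab t; omega
      · have hcard : {i : ℤ | (i, (t : ℤ) + 1) ∈ D}.ncard = (β t - α t + 1).toNat := by
          have hs : {i : ℤ | (i, (t : ℤ) + 1) ∈ D} = Set.Icc (α t) (β t) := by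
            ext i
            simpa using hint t i
          rw [hs, ← Finset.coe_Icc, Set.ncard_coe_finset, Int.card_Icc]
          omega
        have := hnc ((t : ℤ) + 1)
        omega
    · -- IsSnake
      constructor
      · intro t
        refine Xp_sub_X S (Xp_of S hS ?_ ?_ ((t : ℤ) + 1 - α t) rfl)
        · have := hab t; omega
        · have hcard : {i : ℤ | (i, (t : ℤ) + 1) ∈ D}.ncard = (β t - α t + 1).toNat := by
            have hs : {i : ℤ | (i, (t : ℤ) + 1) ∈ D} = Set.Icc (α t) (β t) := by
              ext i
              simpa using hint t i
            rw [hs, ← Finset.coe_Icc, Set.ncard_coe_finset, Int.card_Icc]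
            omega
          have := hnc ((t : ℤ) + 1)
          omega
      · intro t h
        have hXpt : ∀ s : Fin T, ((β s - α s + 1).toNat,
            2 * rd S * ((s : ℤ) + 1 - α s) - rd S * (((β s - α s + 1).toNat : ℤ) - 1)) ∈ Xp S := by
          intro s
          refine Xp_of S hS ?_ ?_ ((s : ℤ) + 1 - α s) rfl
          · have := hab s; omega
          · have hcard : {i : ℤ | (i, (s : ℤ) + 1) ∈ D}.ncard = (β s - α s + 1).toNat := by
              have hs : {i : ℤ | (i, (s : ℤ) + 1) ∈ D} = Set.Icc (α s) (β s) := by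
                ext i
                simpa using hint s i
              rw [hs, ← Finset.coe_Icc, Set.ncard_coe_finset, Int.card_Icc]
              omega
            have := hnc ((s : ℤ) + 1)
            omega
        rw [snakePos_iff S (hXpt t) (hXpt ⟨(t : ℕ) + 1, h⟩) rfl rfl]
        have h1 := hmono t h
        have h2 := hcast t
        have h3 := hcast ⟨(t : ℕ) + 1, h⟩
        have h4 : (((⟨(t : ℕ) + 1, h⟩ : Fin T) : ℕ) : ℤ) = ((t : ℕ) : ℤ) + 1 := by
          simp
        constructor <;> omega
    · -- diagOf = D
      show diagOf S _ = D
      ext ⟨a, b⟩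
      rw [mem_diagOf S (fun t => (t : ℤ) + 1 - α t) (fun t => rfl) a b]
      constructor
      · rintro ⟨t, h1, h2, h3⟩
        have hmem : (a, (t : ℤ) + 1) ∈ D := by
          rw [hint t a]
          have := hcast t
          constructor <;> omega
        rw [h1]
        exact hmem
      · intro hab'
        have hb : 1 ≤ b ∧ b ≤ (T : ℤ) := (hcols b).1 ⟨a, hab'⟩
        have hlt : (b - 1).toNat < T := by omega
        have hcst : (((⟨(b - 1).toNat, hlt⟩ : Fin T) : ℕ) : ℤ) = b - 1 := by
          simp only [Fin.val_mk]; omega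
        have hbt : ((⟨(b - 1).toNat, hlt⟩ : Fin T) : ℤ) + 1 = b := by omega
        have hmem : (a, ((⟨(b - 1).toNat, hlt⟩ : Fin T) : ℤ) + 1) ∈ D := by
          rw [hbt]; exact hab'
        obtain ⟨ha1, ha2⟩ := (hint ⟨(b - 1).toNat, hlt⟩ a).1 hmem
        refine ⟨⟨(b - 1).toNat, hlt⟩, by omega, by omega, ?_⟩
        have := hcast ⟨(b - 1).toNat, hlt⟩
        omega

end Paper
end
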